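/- arXiv:2007.09962 — 4 statements merged into one kernel-verified Lean document; each statement's English description precedes it below -/
import Mathlib

section
/- Fix n ∈ ℕ. Let T be a ternary form of degree d = 8+2n and let A = {P_1,…,P_r} ⊂ ℙ^2 be a non-redundant decomposition of T of length r ≤ 11+3n. Assume the second Kruskal rank of A is k_2(A) = min{6, r}, and the (n+3)-th Kruskal rank of A satisfies k_{n+3}(A) ≥ min{r, 3n+9}. Then T has rank r and is identifiable. -/
open MvPolynomial
open scoped Classical

noncomputable section
set_option maxHeartbeats 1000000

/-- Points of the projective space `ℙ^m` over `ℂ`. -/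
abbrev Pt (m : ℕ) := Projectivization ℂ (Fin (m + 1) → ℂ)

/-- The linear form with coefficient vector `v`. -/
def linForm {m : ℕ} (v : Fin (m + 1) → ℂ) : MvPolynomial (Fin (m + 1)) ℂ :=
  ∑ i, C (v i) * X i

/-- The degree-`d` Veronese image of a projective point, i.e. the `d`-th power `L^d`
of a linear form `L` representing the point. -/
def powRep {m : ℕ} (d : ℕ) (P : Pt m) : MvPolynomial (Fin (m + 1)) ℂ :=
  linForm P.rep ^ d

/-- `A ⊆ ℙ^m` is a decomposition of the form `T` of degree `d`:
`T = a_1 L_1^d + ⋯ + a_r L_r^d`. -/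
def IsDecomp {m : ℕ} (d : ℕ) (A : Finset (Pt m))
    (T : MvPolynomial (Fin (m + 1)) ℂ) : Prop :=
  ∃ a : Pt m → ℂ, T = ∑ P ∈ A, a P • powRep d P

/-- A decomposition is non-redundant if `T` is not in the span of `ν_d(A')`
for any proper subset `A' ⊊ A`. -/
def NonRedundant {m : ℕ} (d : ℕ) (A : Finset (Pt m))
    (T : MvPolynomial (Fin (m + 1)) ℂ) : Prop :=
  ∀ A' : Finset (Pt m), A' ⊂ A →
    T ∉ Submodule.span ℂ (powRep d '' (A' : Set (Pt m)))

/-- The Cayley–Bacharach property `CB(d)`. -/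
def CB {m : ℕ} (d : ℕ) (Z : Finset (Pt m)) : Prop :=
  ∀ P ∈ Z, ∀ F : MvPolynomial (Fin (m + 1)) ℂ, F.IsHomogeneous d →
    (∀ Q ∈ Z.erase P, eval Q.rep F = 0) → eval P.rep F = 0

/-- The `d`-th Kruskal rank of a finite set `Z ⊂ ℙ^m`: the largest `k` (at most `ℓ(Z)`)
such that the Veronese images of every subset of `Z` of cardinality at most `k`
are linearly independent. -/
def kruskalRank {m : ℕ} (d : ℕ) (Z : Finset (Pt m)) : ℕ :=
  sSup {k | k ≤ Z.card ∧ ∀ S ⊆ Z, S.card ≤ k →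
    LinearIndependent ℂ (fun P : S => powRep d P.1)}

/-- The evaluation map of degree `d` on (representatives of) the points of `Z`. -/
def evalMap {m : ℕ} (Z : Finset (Pt m)) (d : ℕ) :
    homogeneousSubmodule (Fin (m + 1)) ℂ d →ₗ[ℂ] (Z → ℂ) where
  toFun F P := eval (P : Pt m).rep F.1
  map_add' F G := by funext P; simp
  map_smul' c F := by funext P; simp [smul_eq_C_mul]

/-- The Hilbert function of a finite set of points `Z ⊂ ℙ^m`. -/
def hf {m : ℕ} (Z : Finset (Pt m)) (d : ℕ) : ℕ :=
  Module.finrank ℂ (LinearMap.range (evalMap Z d))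

/-- The first difference of the Hilbert function (with `h_Z(j) = 0` for `j < 0`). -/
def Dhf {m : ℕ} (Z : Finset (Pt m)) (j : ℕ) : ℤ :=
  if j = 0 then (hf Z 0 : ℤ) else (hf Z j : ℤ) - (hf Z (j - 1) : ℤ)

-- ============ my infrastructure ============
namespace Stmt5Aux

abbrev V3 := Fin 3 → ℂ

def dot (u v : V3) : ℂ := ∑ i, u i * v i

lemma dot_expand (u v : V3) : dot u v = u 0 * v 0 + u 1 * v 1 + u 2 * v 2 := by
  simp [dot, Fin.sum_univ_three]

lemma dot_comm (u v : V3) : dot u v = dot v u := by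
  simp [dot_expand]; ring

lemma dot_lin (v w u : V3) (s : ℂ) :
    dot v (w + s • u) = dot v w + dot v u * s := by
  simp [dot_expand, Pi.add_apply, Pi.smul_apply, smul_eq_mul]; ring

lemma dot_add_left (v w u : V3) : dot (v + w) u = dot v u + dot w u := by
  simp [dot_expand, Pi.add_apply]; ring

lemma dot_smul_left (s : ℂ) (v u : V3) : dot (s • v) u = s * dot v u := by
  simp [dot_expand, Pi.smul_apply, smul_eq_mul]; ring

def cross (a b : V3) : V3 :=
  ![a 1 * b 2 - a 2 * b 1, a 2 * b 0 - a 0 * b 2, a 0 * b 1 - a 1 * b 0]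

lemma cross_0 (a b : V3) : cross a b 0 = a 1 * b 2 - a 2 * b 1 := rfl
lemma cross_1 (a b : V3) : cross a b 1 = a 2 * b 0 - a 0 * b 2 := rfl
lemma cross_2 (a b : V3) : cross a b 2 = a 0 * b 1 - a 1 * b 0 := rfl

lemma V3_ext {u v : V3} (h0 : u 0 = v 0) (h1 : u 1 = v 1) (h2 : u 2 = v 2) : u = v := by
  funext i
  match i with
  | 0 => exact h0
  | 1 => exact h1
  | 2 => exact h2

lemma V3_ne_zero_iff (v : V3) : v ≠ 0 ↔ ¬ (v 0 = 0 ∧ v 1 = 0 ∧ v 2 = 0) := by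
  constructor
  · intro hv h; exact hv (V3_ext h.1 h.2.1 h.2.2)
  · intro h hv; exact h ⟨by rw [hv]; rfl, by rw [hv]; rfl, by rw [hv]; rfl⟩

lemma dot_cross_left (a b : V3) : dot (cross a b) a = 0 := by
  simp [dot_expand, cross_0, cross_1, cross_2]; ring

lemma dot_cross_right (a b : V3) : dot (cross a b) b = 0 := by
  simp [dot_expand, cross_0, cross_1, cross_2]; ring

lemma dot_cross_swap (v z w : V3) : dot (cross v z) w = dot z (cross w v) := by
  simp [dot_expand, cross_0, cross_1, cross_2]; ring

lemma cross_antisymm (a b : V3) : cross a b = - cross b a := by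
  apply V3_ext <;> simp [cross_0, cross_1, cross_2, Pi.neg_apply] <;> ring

lemma cross_cross (v a b : V3) :
    cross v (cross a b) = dot v b • a - dot v a • b := by
  apply V3_ext <;>
    simp [cross_0, cross_1, cross_2, dot_expand, Pi.sub_apply, Pi.smul_apply, smul_eq_mul] <;> ring

lemma cross_add_right (v a b : V3) : cross v (a + b) = cross v a + cross v b := by
  apply V3_ext <;> simp [cross_0, cross_1, cross_2, Pi.add_apply] <;> ring

lemma cross_smul_right (v : V3) (s : ℂ) (a : V3) : cross v (s • a) = s • cross v a := by
  apply V3_ext <;> simp [cross_0, cross_1, cross_2, Pi.smul_apply, smul_eq_mul] <;> ring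

/-- If `cross v w = 0` and `v ≠ 0` then `w` is a multiple of `v`. -/
lemma cross_eq_zero (v w : V3) (hv : v ≠ 0) (h : cross v w = 0) : ∃ t : ℂ, w = t • v := by
  have h0 : v 1 * w 2 - v 2 * w 1 = 0 := by simpa [cross_0] using congrFun h 0
  have h1 : v 2 * w 0 - v 0 * w 2 = 0 := by simpa [cross_1] using congrFun h 1
  have h2 : v 0 * w 1 - v 1 * w 0 = 0 := by simpa [cross_2] using congrFun h 2
  have hne : ¬(v 0 = 0 ∧ v 1 = 0 ∧ v 2 = 0) := (V3_ne_zero_iff v).mp hv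
  by_cases hv0 : v 0 ≠ 0
  · refine ⟨w 0 / v 0, V3_ext ?_ ?_ ?_⟩ <;> simp only [Pi.smul_apply, smul_eq_mul]
    · rw [div_mul_cancel₀ _ hv0]
    · rw [div_mul_eq_mul_div, eq_div_iff hv0]; linear_combination h2
    · rw [div_mul_eq_mul_div, eq_div_iff hv0]; linear_combination -h1
  · by_cases hv1 : v 1 ≠ 0
    · refine ⟨w 1 / v 1, V3_ext ?_ ?_ ?_⟩ <;> simp only [Pi.smul_apply, smul_eq_mul]
      · rw [div_mul_eq_mul_div, eq_div_iff hv1]; linear_combination -h2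
      · rw [div_mul_cancel₀ _ hv1]
      · rw [div_mul_eq_mul_div, eq_div_iff hv1]; linear_combination h0
    · have hv2 : v 2 ≠ 0 := by
        push_neg at hv0 hv1; intro h2'; exact hne ⟨hv0, hv1, h2'⟩
      refine ⟨w 2 / v 2, V3_ext ?_ ?_ ?_⟩ <;> simp only [Pi.smul_apply, smul_eq_mul]
      · rw [div_mul_eq_mul_div, eq_div_iff hv2]; linear_combination h1
      · rw [div_mul_eq_mul_div, eq_div_iff hv2]; linear_combination -h0
      · rw [div_mul_cancel₀ _ hv2]

lemma cross_ne_zero (v w : V3) (hv : v ≠ 0) (h : ∀ t : ℂ, w ≠ t • v) : cross v w ≠ 0 := by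
  intro h0
  rcases cross_eq_zero v w hv h0 with ⟨t, ht⟩
  exact h t ht

/-- Vandermonde trick: a vector pairing nontrivially with finitely many nonzero vectors. -/
lemma exists_dot_ne {ι : Type*} (S : Finset ι) (g : ι → V3) (hg : ∀ i ∈ S, g i ≠ 0) :
    ∃ z : V3, ∀ i ∈ S, dot z (g i) ≠ 0 := by
  classical
  let p : ι → Polynomial ℂ := fun i =>
    Polynomial.C (g i 0) + Polynomial.C (g i 1) * Polynomial.X +
      Polynomial.C (g i 2) * Polynomial.X ^ 2
  have hp : ∀ i ∈ S, p i ≠ 0 := by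
    intro i hi hzero
    apply (V3_ne_zero_iff (g i)).mp (hg i hi)
    have c0 := congrArg (fun q => Polynomial.coeff q 0) hzero
    have c1 := congrArg (fun q => Polynomial.coeff q 1) hzero
    have c2 := congrArg (fun q => Polynomial.coeff q 2) hzero
    simp [p, Polynomial.coeff_add, Polynomial.coeff_C, Polynomial.coeff_C_mul,
      Polynomial.coeff_X_pow] at c0 c1 c2
    exact ⟨c0, c1, c2⟩
  have hP : (∏ i ∈ S, p i) ≠ 0 := Finset.prod_ne_zero_iff.mpr hp
  have : ∃ s : ℂ, (∏ i ∈ S, p i).eval s ≠ 0 := by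
    by_contra hall
    push_neg at hall
    exact hP (Polynomial.funext (fun r => by simpa using hall r))
  rcases this with ⟨s, hs⟩
  refine ⟨![1, s, s ^ 2], fun i hi => ?_⟩
  have : (p i).eval s ≠ 0 := by
    intro h0
    exact hs (by rw [Polynomial.eval_prod]; exact Finset.prod_eq_zero hi h0)
  have hval : (p i).eval s = dot ![1, s, s ^ 2] (g i) := by
    simp [p, dot_expand, Polynomial.eval_add, Polynomial.eval_mul, Polynomial.eval_pow]
    ring
  rwa [hval] at this

/-- Separation: a functional vanishing on `v` but not on finitely many vectors
non-proportional to `v`. -/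
lemma exists_perp_sep {ι : Type*} (v : V3) (hv : v ≠ 0) (S : Finset ι) (g : ι → V3)
    (hS : ∀ i ∈ S, ∀ t : ℂ, g i ≠ t • v) :
    ∃ u : V3, dot u v = 0 ∧ ∀ i ∈ S, dot u (g i) ≠ 0 := by
  have hgz : ∀ i ∈ S, cross (g i) v ≠ 0 := by
    intro i hi
    have hgi : g i ≠ 0 := by
      intro h0; exact hS i hi 0 (by rw [h0]; simp)
    apply cross_ne_zero (g i) v hgi
    intro t ht
    have ht' : t ≠ 0 := by
      intro h0; rw [h0] at ht; simp at ht; exact hv ht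
    exact hS i hi t⁻¹ (by rw [ht, smul_smul, inv_mul_cancel₀ ht', one_smul])
  rcases exists_dot_ne S (fun i => cross (g i) v) hgz with ⟨z, hz⟩
  refine ⟨cross v z, dot_cross_left v z, fun i hi => ?_⟩
  rw [dot_cross_swap]
  exact hz i hi

lemma Pt2_rep_ne_zero (P : Pt 2) : P.rep ≠ 0 := Projectivization.rep_nonzero P

lemma rep_nonprop {P Q : Pt 2} (h : P ≠ Q) : ∀ t : ℂ, Q.rep ≠ t • P.rep := by
  intro t ht
  apply h
  have hQ : Q = Projectivization.mk ℂ Q.rep (Pt2_rep_ne_zero Q) := (Projectivization.mk_rep Q).symm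
  have hP : P = Projectivization.mk ℂ P.rep (Pt2_rep_ne_zero P) := (Projectivization.mk_rep P).symm
  rw [hP, hQ]
  symm
  rw [Projectivization.mk_eq_mk_iff]
  have ht0 : t ≠ 0 := by
    intro h0; rw [h0, zero_smul] at ht; exact Pt2_rep_ne_zero Q ht
  exact ⟨Units.mk0 t ht0, ht.symm⟩

lemma pt_eq_of_smul {P Q : Pt 2} (t : ℂ) (h : Q.rep = t • P.rep) : P = Q := by
  by_contra hne
  exact rep_nonprop hne t h

/-- Two independent vectors orthogonal (via dot) to both x and y force x ∥ y. -/
lemma double_perp (u1 u2 x y : V3)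
    (hind : ∀ s t : ℂ, s • u1 + t • u2 = 0 → s = 0 ∧ t = 0)
    (hy : y ≠ 0)
    (hx1 : dot u1 x = 0) (hx2 : dot u2 x = 0) (hy1 : dot u1 y = 0) (hy2 : dot u2 y = 0) :
    ∃ t : ℂ, x = t • y := by
  have hu1 : u1 ≠ 0 := by
    intro h; rcases hind 1 0 (by rw [h]; simp) with ⟨h1, _⟩; exact one_ne_zero h1
  have hC : cross u1 u2 ≠ 0 := by
    apply cross_ne_zero u1 u2 hu1
    intro t ht
    rcases hind t (-1) (by rw [ht]; simp) with ⟨_, h1⟩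
    simpa using h1
  have key : ∀ w : V3, dot u1 w = 0 → dot u2 w = 0 → cross w (cross u1 u2) = 0 := by
    intro w h1 h2
    rw [cross_cross]
    have e1 : dot w u1 = 0 := by rw [dot_comm]; exact h1
    have e2 : dot w u2 = 0 := by rw [dot_comm]; exact h2
    rw [e1, e2]; simp
  have hyC : ∃ t : ℂ, y = t • cross u1 u2 := by
    have h0 : cross (cross u1 u2) y = 0 := by
      rw [cross_antisymm]; rw [key y hy1 hy2]; simp
    exact cross_eq_zero _ y hC h0
  have hxC : ∃ t : ℂ, x = t • cross u1 u2 := by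
    have h0 : cross (cross u1 u2) x = 0 := by
      rw [cross_antisymm]; rw [key x hx1 hx2]; simp
    exact cross_eq_zero _ x hC h0
  rcases hyC with ⟨ty, hty⟩
  rcases hxC with ⟨tx, htx⟩
  have hty0 : ty ≠ 0 := by
    intro h0; rw [h0, zero_smul] at hty; exact hy hty
  exact ⟨tx / ty, by rw [htx, hty, smul_smul]; congr 1; field_simp⟩

lemma exists_coord_ne (v : V3) (hv : v ≠ 0) : ∃ j, v j ≠ 0 := by
  rcases Function.ne_iff.mp hv with ⟨j, hj⟩
  exact ⟨j, by simpa using hj⟩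

lemma dot_single (j : Fin 3) (v : V3) : dot (Pi.single j (1:ℂ)) v = v j := by
  simp [dot, Pi.single_apply]

/-- A basis of the perp-plane of a nonzero vector. -/
lemma perp_basis (v : V3) (hv : v ≠ 0) :
    ∃ u1 u2 : V3, dot u1 v = 0 ∧ dot u2 v = 0 ∧
      (∀ s t : ℂ, s • u1 + t • u2 = 0 → s = 0 ∧ t = 0) ∧
      (∀ w : V3, dot w v = 0 → ∃ s t : ℂ, w = s • u1 + t • u2) := by
  let f : V3 →ₗ[ℂ] ℂ :=
    { toFun := fun w => dot w v
      map_add' := fun a b => dot_add_left a b v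
      map_smul' := fun s a => by simpa using dot_smul_left s a v }
  have hfapp : ∀ w, f w = dot w v := fun w => rfl
  have hrange : LinearMap.range f = ⊤ := by
    rcases exists_coord_ne v hv with ⟨j, hj⟩
    rw [LinearMap.range_eq_top]
    intro c
    refine ⟨(c / v j) • (Pi.single j 1 : V3), ?_⟩
    rw [map_smul, hfapp, dot_single]
    rw [smul_eq_mul, div_mul_cancel₀ c hj]
  have hV3 : Module.finrank ℂ V3 = 3 := by
    rw [Module.finrank_pi]; simp
  have hkrank : Module.finrank ℂ (LinearMap.ker f) = 2 := by
    have := LinearMap.finrank_range_add_finrank_ker f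
    rw [hrange, hV3] at this
    have h1 : Module.finrank ℂ (⊤ : Submodule ℂ ℂ) = 1 := by
      rw [finrank_top, Module.finrank_self]
    omega
  let b := Module.finBasisOfFinrankEq ℂ (LinearMap.ker f) hkrank
  refine ⟨(b 0 : V3), (b 1 : V3), ?_, ?_, ?_, ?_⟩
  · exact LinearMap.mem_ker.mp (b 0).2
  · exact LinearMap.mem_ker.mp (b 1).2
  · intro s t hst
    have hmem : s • b 0 + t • b 1 = (0 : LinearMap.ker f) := by
      apply Subtype.ext
      simp only [Submodule.coe_add, SetLike.val_smul, ZeroMemClass.coe_zero]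
      exact hst
    have hli := b.linearIndependent
    rw [linearIndependent_iff'] at hli
    have := hli Finset.univ ![s, t] (by
      rw [Fin.sum_univ_two]
      simp only [Matrix.cons_val_zero, Matrix.cons_val_one, Matrix.head_cons]
      exact hmem)
    have e0 := this 0 (Finset.mem_univ 0)
    have e1 := this 1 (Finset.mem_univ 1)
    simp only [Matrix.cons_val_zero, Matrix.cons_val_one, Matrix.head_cons] at e0 e1
    exact ⟨e0, e1⟩
  · intro w hw
    have hwk : w ∈ LinearMap.ker f := LinearMap.mem_ker.mpr hw
    have := b.sum_repr ⟨w, hwk⟩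
    refine ⟨b.repr ⟨w, hwk⟩ 0, b.repr ⟨w, hwk⟩ 1, ?_⟩
    rw [Fin.sum_univ_two] at this
    have h2 := congrArg (Subtype.val) this
    simp only [Submodule.coe_add, SetLike.val_smul] at h2
    exact h2.symm


-- ============ relations and contraction ============

/-- `FR j S c`: the degree-`j` powers of the points of `S` satisfy the linear
relation with coefficients `c` (expressed via evaluations). -/
def FR (j : ℕ) (S : Finset (Pt 2)) (c : Pt 2 → ℂ) : Prop :=
  ∀ w : V3, ∑ P ∈ S, c P * dot P.rep w ^ j = 0

/-- `Ind j S`: the degree-`j` powers of the points of `S` are linearly independent. -/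
def Ind (j : ℕ) (S : Finset (Pt 2)) : Prop :=
  ∀ c : Pt 2 → ℂ, FR j S c → ∀ P ∈ S, c P = 0

lemma FR_congr_support {j : ℕ} {S S' : Finset (Pt 2)} {c : Pt 2 → ℂ}
    (hss : S ⊆ S') (hz : ∀ P ∈ S', P ∉ S → c P = 0) :
    FR j S c ↔ FR j S' c := by
  have hsum : ∀ w : V3, ∑ P ∈ S, c P * dot P.rep w ^ j = ∑ P ∈ S', c P * dot P.rep w ^ j := by
    intro w
    exact Finset.sum_subset hss (fun P hP hPn => by rw [hz P hP hPn, zero_mul])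
  constructor <;> intro h w
  · rw [← hsum w]; exact h w
  · rw [hsum w]; exact h w

lemma Ind_mono {j : ℕ} {S S' : Finset (Pt 2)} (hss : S ⊆ S') (h : Ind j S') : Ind j S := by
  intro c hFR P hP
  classical
  set c' : Pt 2 → ℂ := fun Q => if Q ∈ S then c Q else 0 with hc'
  have hFR' : FR j S' c' := by
    have h1 : FR j S c' := by
      intro w
      have := hFR w
      rw [← this]
      exact Finset.sum_congr rfl (fun Q hQ => by simp [hc', if_pos hQ])
    exact (FR_congr_support hss (fun Q _ hQn => by simp [hc', if_neg hQn])).mp h1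
  have := h c' hFR' P (hss hP)
  simpa [hc', if_pos hP] using this

lemma coeff_CCX (α β : ℂ) (N k : ℕ) (hk : k ≤ N) :
    ((Polynomial.C α + Polynomial.C β * Polynomial.X) ^ N).coeff k
      = (N.choose k : ℂ) * α ^ (N - k) * β ^ k := by
  rw [add_pow, Polynomial.finset_sum_coeff]
  have hterm : ∀ m ∈ Finset.range (N + 1),
      ((Polynomial.C α) ^ m * (Polynomial.C β * Polynomial.X) ^ (N - m)
          * ((N.choose m : ℕ) : Polynomial ℂ)).coeff k
        = if m = N - k then (N.choose k : ℂ) * α ^ (N - k) * β ^ k else 0 := by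
    intro m hm
    have hmN : m ≤ N := by
      have := Finset.mem_range.mp hm; omega
    rw [mul_pow, ← Polynomial.C_pow, ← Polynomial.C_pow, ← Polynomial.C_eq_natCast,
      Polynomial.coeff_mul_C, Polynomial.coeff_C_mul, Polynomial.coeff_C_mul,
      Polynomial.coeff_X_pow]
    by_cases hcase : m = N - k
    · subst hcase
      have h1 : k = N - (N - k) := by omega
      rw [if_pos h1, if_pos rfl]
      have h2 : N - (N - k) = k := by omega
      rw [h2]
      have h3 : (N.choose (N - k) : ℂ) = (N.choose k : ℂ) := by
        norm_cast
        exact Nat.choose_symm hk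
      rw [h3]; ring
    · have h1 : k ≠ N - m := by omega
      rw [if_neg h1, if_neg hcase]
      ring
  rw [Finset.sum_congr rfl hterm, Finset.sum_ite_eq' (Finset.range (N + 1))]
  rw [if_pos (Finset.mem_range.mpr (by omega))]

/-- The fundamental contraction lemma. -/
lemma contract (S₁ S₂ : Finset (Pt 2)) (c₁ c₂ : Pt 2 → ℂ) (k j : ℕ)
    (h : ∀ w : V3, ∑ P ∈ S₁, c₁ P * dot P.rep w ^ (k + j)
      = ∑ P ∈ S₂, c₂ P * dot P.rep w ^ (k + j)) :
    ∀ u w : V3, ∑ P ∈ S₁, c₁ P * (dot P.rep u ^ k * dot P.rep w ^ j)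
      = ∑ P ∈ S₂, c₂ P * (dot P.rep u ^ k * dot P.rep w ^ j) := by
  intro u w
  set N := k + j with hN
  let q : Polynomial ℂ :=
    (∑ P ∈ S₁, Polynomial.C (c₁ P) *
        (Polynomial.C (dot P.rep w) + Polynomial.C (dot P.rep u) * Polynomial.X) ^ N)
      - (∑ P ∈ S₂, Polynomial.C (c₂ P) *
        (Polynomial.C (dot P.rep w) + Polynomial.C (dot P.rep u) * Polynomial.X) ^ N)
  have hq : ∀ s : ℂ, q.eval s = 0 := by
    intro s
    have hdot : ∀ P : Pt 2, dot P.rep w + dot P.rep u * s = dot P.rep (w + s • u) := by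
      intro P; rw [dot_lin]
    simp only [q, Polynomial.eval_sub, Polynomial.eval_finset_sum, Polynomial.eval_mul,
      Polynomial.eval_pow, Polynomial.eval_add, Polynomial.eval_C, Polynomial.eval_X]
    have := h (w + s • u)
    rw [sub_eq_zero]
    calc ∑ P ∈ S₁, c₁ P * (dot P.rep w + dot P.rep u * s) ^ N
        = ∑ P ∈ S₁, c₁ P * dot P.rep (w + s • u) ^ N :=
          Finset.sum_congr rfl (fun P _ => by rw [hdot])
      _ = ∑ P ∈ S₂, c₂ P * dot P.rep (w + s • u) ^ N := this
      _ = ∑ P ∈ S₂, c₂ P * (dot P.rep w + dot P.rep u * s) ^ N :=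
          Finset.sum_congr rfl (fun P _ => by rw [hdot])
  have hq0 : q = 0 := Polynomial.funext (fun s => by rw [hq s]; simp)
  have hco := congrArg (fun p => Polynomial.coeff p k) hq0
  have hkN : k ≤ N := by omega
  have hNk : N - k = j := by omega
  simp only [q, Polynomial.coeff_sub, Polynomial.finset_sum_coeff,
    Polynomial.coeff_C_mul, Polynomial.coeff_zero] at hco
  rw [sub_eq_zero] at hco
  have hrw : ∀ (S : Finset (Pt 2)) (c : Pt 2 → ℂ),
      ∑ P ∈ S, c P * ((Polynomial.C (dot P.rep w) + Polynomial.C (dot P.rep u)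
          * Polynomial.X) ^ N).coeff k
        = (N.choose k : ℂ) * ∑ P ∈ S, c P * (dot P.rep u ^ k * dot P.rep w ^ j) := by
    intro S c
    rw [Finset.mul_sum]
    refine Finset.sum_congr rfl (fun P _ => ?_)
    rw [coeff_CCX _ _ _ _ hkN, hNk]
    ring
  rw [hrw, hrw] at hco
  have hch : (N.choose k : ℂ) ≠ 0 := by
    have := Nat.choose_pos hkN
    exact_mod_cast Nat.cast_ne_zero.mpr (by omega)
  exact mul_left_cancel₀ hch hco

/-- One-sided version: contracting a relation. -/
lemma contract_rel {S : Finset (Pt 2)} {c : Pt 2 → ℂ} {j : ℕ}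
    (h : FR (j + 1) S c) (u : V3) : FR j S (fun P => c P * dot P.rep u) := by
  intro w
  have h' : ∀ w : V3, ∑ P ∈ S, c P * dot P.rep w ^ (1 + j)
      = ∑ P ∈ (∅ : Finset (Pt 2)), c P * dot P.rep w ^ (1 + j) := by
    intro w'
    rw [Finset.sum_empty]
    have := h w'
    rw [← this]
    exact Finset.sum_congr rfl (fun P _ => by rw [add_comm 1 j])
  have := contract S ∅ c c 1 j h' u w
  rw [Finset.sum_empty] at this
  rw [← this]
  exact Finset.sum_congr rfl (fun P _ => by rw [pow_one]; ring)

lemma FR_single_support {j : ℕ} {S : Finset (Pt 2)} {c : Pt 2 → ℂ} {P₀ : Pt 2}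
    (hP₀ : P₀ ∈ S) (hz : ∀ P ∈ S, P ≠ P₀ → c P = 0) (h : FR j S c) : c P₀ = 0 := by
  rcases exists_dot_ne {P₀} (fun P : Pt 2 => P.rep) (fun P _ => Pt2_rep_ne_zero P) with ⟨z, hz'⟩
  have hzP : dot P₀.rep z ≠ 0 := by
    rw [dot_comm]; exact hz' P₀ (Finset.mem_singleton_self P₀)
  have := h z
  have hsum : ∑ P ∈ S, c P * dot P.rep z ^ j = c P₀ * dot P₀.rep z ^ j := by
    rw [Finset.sum_eq_single P₀]
    · intro P hP hne; rw [hz P hP hne, zero_mul]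
    · intro h'; exact absurd hP₀ h'
  rw [hsum] at this
  rcases mul_eq_zero.mp this with h' | h'
  · exact h'
  · exact absurd h' (pow_ne_zero j hzP)

/-- Core step: a nontrivial relation in degree `j+1` yields a smaller nontrivial
relation in degree `j`. -/
lemma step_core {j : ℕ} {S : Finset (Pt 2)} {c : Pt 2 → ℂ} (hFR : FR (j + 1) S c)
    {P₀ : Pt 2} (hP₀ : P₀ ∈ S) (hc0 : c P₀ ≠ 0) :
    ∃ S' : Finset (Pt 2), S' ⊆ S ∧ S'.card + 1 ≤ S.card ∧ S'.Nonempty ∧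
      ∃ c' : Pt 2 → ℂ, FR j S' c' ∧ ∀ P ∈ S', c' P ≠ 0 := by
  classical
  set Sc := S.filter (fun P => c P ≠ 0) with hSc
  have hP₀Sc : P₀ ∈ Sc := Finset.mem_filter.mpr ⟨hP₀, hc0⟩
  set S' := Sc.erase P₀ with hS'
  have hS'S : S' ⊆ S := fun P hP =>
    Finset.filter_subset _ S (Finset.mem_of_mem_erase hP)
  have hcard : S'.card + 1 ≤ S.card := by
    have h1 : S'.card = Sc.card - 1 := Finset.card_erase_of_mem hP₀Sc
    have h2 : Sc.card ≤ S.card := Finset.card_filter_le _ _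
    have h3 : 1 ≤ Sc.card := Finset.card_pos.mpr ⟨P₀, hP₀Sc⟩
    omega
  by_cases hne : S'.Nonempty
  · -- separate P₀ from the rest of the support
    have hsep : ∀ P ∈ S', ∀ t : ℂ, P.rep ≠ t • P₀.rep := by
      intro P hP t
      have hPne : P ≠ P₀ := Finset.ne_of_mem_erase hP
      exact rep_nonprop hPne.symm t
    rcases exists_perp_sep P₀.rep (Pt2_rep_ne_zero P₀) S' (fun P : Pt 2 => P.rep) hsep
      with ⟨u, hu0, husep⟩
    refine ⟨S', hS'S, hcard, hne, fun P => c P * dot P.rep u, ?_, ?_⟩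
    · have h1 : FR j S (fun P => c P * dot P.rep u) := contract_rel hFR u
      refine (FR_congr_support hS'S ?_).mpr h1
      intro P hP hPn
      by_cases hPc : c P = 0
      · rw [hPc, zero_mul]
      · have hPSc : P ∈ Sc := Finset.mem_filter.mpr ⟨hP, hPc⟩
        have : P = P₀ := by
          by_contra hne'
          exact hPn (Finset.mem_erase.mpr ⟨hne', hPSc⟩)
        rw [this, dot_comm, hu0, mul_zero]
    · intro P hP
      have h1 : c P ≠ 0 := (Finset.mem_filter.mp (Finset.mem_of_mem_erase hP)).2
      have h2 : dot P.rep u ≠ 0 := by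
        rw [dot_comm]; exact husep P hP
      exact mul_ne_zero h1 h2
  · -- support is exactly {P₀}: direct contradiction
    exfalso
    apply hc0
    apply FR_single_support hP₀ _ hFR
    intro P hP hne'
    by_contra hPc
    have hPSc : P ∈ Sc := Finset.mem_filter.mpr ⟨hP, hPc⟩
    exact hne ⟨P, Finset.mem_erase.mpr ⟨hne', hPSc⟩⟩

/-- Universal independence: any `j+1` distinct points have independent `j`-th powers. -/
lemma Ind_univ : ∀ (j : ℕ) (S : Finset (Pt 2)), S.card ≤ j + 1 → Ind j S := by
  intro j
  induction j with
  | zero =>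
    intro S hS c hFR P hP
    have hsing : ∀ Q ∈ S, Q ≠ P → c Q = 0 := by
      intro Q hQ hne
      exact absurd (Finset.card_le_one.mp hS Q hQ P hP) hne
    have := FR_single_support hP hsing hFR
    exact this
  | succ j ih =>
    intro S hS c hFR P hP
    by_contra hc0
    rcases step_core hFR hP hc0 with ⟨S', _, hcard, hne, c', hFR', hc'⟩
    rcases hne with ⟨Q, hQ⟩
    exact hc' Q hQ (ih S' (by omega) c' hFR' Q hQ)

/-- Step-up for Kruskal-type bounds relative to a fixed ambient set `A`. -/
lemma Ind_step {A : Finset (Pt 2)} {j m : ℕ}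
    (h : ∀ S ⊆ A, S.card ≤ m → Ind j S) :
    ∀ S ⊆ A, S.card ≤ m + 1 → Ind (j + 1) S := by
  intro S hSA hS c hFR P hP
  by_contra hc0
  rcases step_core hFR hP hc0 with ⟨S', hS'S, hcard, hne, c', hFR', hc'⟩
  rcases hne with ⟨Q, hQ⟩
  exact hc' Q hQ (h S' (hS'S.trans hSA) (by omega) c' hFR' Q hQ)


-- ============ small kernel lemmas, line and conic dependencies ============

def momentLM {ι : Type*} [Fintype ι] {κ : Type*} (m : κ → ι → ℂ) :
    (ι → ℂ) →ₗ[ℂ] (κ → ℂ) where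
  toFun := fun x k => ∑ i, x i * m k i
  map_add' := by
    intro x y; funext k
    simp [Pi.add_apply, add_mul, Finset.sum_add_distrib]
  map_smul' := by
    intro s x; funext k
    simp [Pi.smul_apply, smul_eq_mul, Finset.mul_sum, mul_assoc]

lemma momentLM_apply {ι : Type*} [Fintype ι] {κ : Type*} (m : κ → ι → ℂ) (x : ι → ℂ) (k : κ) :
    momentLM m x k = ∑ i, x i * m k i := rfl

lemma exists_ker_general {ι : Type*} [Fintype ι] {W : Type*} [AddCommGroup W] [Module ℂ W]
    (f : (ι → ℂ) →ₗ[ℂ] W) (U : Submodule ℂ W) [FiniteDimensional ℂ U]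
    (hlt : Module.finrank ℂ U < Fintype.card ι) (hmem : ∀ x, f x ∈ U) :
    ∃ c : ι → ℂ, c ≠ 0 ∧ f c = 0 := by
  classical
  let f' : (ι → ℂ) →ₗ[ℂ] U := f.codRestrict U hmem
  by_contra h
  push_neg at h
  have hinj : Function.Injective f' := by
    rw [← LinearMap.ker_eq_bot]
    rw [Submodule.eq_bot_iff]
    intro x hx
    by_contra hx0
    apply h x hx0
    have : (f' x : W) = 0 := by rw [hx]; rfl
    simpa [f', LinearMap.codRestrict_apply] using this
  have := LinearMap.finrank_le_finrank_of_injective hinj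
  rw [Module.finrank_pi] at this
  omega

lemma four_dep (S : Finset (Pt 2)) (h4 : S.card = 4) (u : V3) (hu : u ≠ 0)
    (hperp : ∀ P ∈ S, dot P.rep u = 0) :
    ∃ c : Pt 2 → ℂ, (∃ P ∈ S, c P ≠ 0) ∧ FR 2 S c := by
  classical
  obtain ⟨u1, u2, _, _, _, hspan⟩ := perp_basis u hu
  let s1 : Pt 2 → ℂ := fun P => if h : ∃ s t : ℂ, P.rep = s • u1 + t • u2 then h.choose else 0
  let s2 : Pt 2 → ℂ := fun P =>
    if h : ∃ s t : ℂ, P.rep = s • u1 + t • u2 then h.choose_spec.choose else 0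
  have hcoords : ∀ P ∈ S, P.rep = s1 P • u1 + s2 P • u2 := by
    intro P hP
    have hex : ∃ s t : ℂ, P.rep = s • u1 + t • u2 := hspan P.rep (hperp P hP)
    simp only [s1, s2, dif_pos hex]
    exact hex.choose_spec.choose_spec
  let m : Fin 3 → ↥S → ℂ := fun k i =>
    ![s1 i.1 * s1 i.1, s1 i.1 * s2 i.1, s2 i.1 * s2 i.1] k
  have hcardS : Fintype.card ↥S = 4 := by rw [Fintype.card_coe, h4]
  have hfr : Module.finrank ℂ (⊤ : Submodule ℂ (Fin 3 → ℂ)) < Fintype.card ↥S := by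
    rw [finrank_top, Module.finrank_pi, hcardS]; simp
  obtain ⟨c₀, hc₀ne, hc₀⟩ :=
    exists_ker_general (momentLM m) ⊤ hfr (fun x => Submodule.mem_top)
  refine ⟨fun P => if h : P ∈ S then c₀ ⟨P, h⟩ else 0, ?_, ?_⟩
  · rcases Function.ne_iff.mp hc₀ne with ⟨i, hi⟩
    refine ⟨i.1, i.2, ?_⟩
    simpa [dif_pos i.2] using hi
  · intro w
    have hmom : ∀ k : Fin 3, ∑ i : ↥S, c₀ i * m k i = 0 := by
      intro k
      have := congrFun hc₀ k
      simpa [momentLM_apply] using this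
    let coefw : Fin 3 → ℂ := ![dot u1 w * dot u1 w, 2 * (dot u1 w * dot u2 w), dot u2 w * dot u2 w]
    calc ∑ P ∈ S, (if h : P ∈ S then c₀ ⟨P, h⟩ else 0) * dot P.rep w ^ 2
        = ∑ i ∈ S.attach, (if h : (i : Pt 2) ∈ S then c₀ ⟨i.1, h⟩ else 0) * dot (i : Pt 2).rep w ^ 2 :=
          (Finset.sum_attach S _).symm
      _ = ∑ i : ↥S, ∑ k : Fin 3, c₀ i * m k i * coefw k := by
          rw [Finset.univ_eq_attach]
          refine Finset.sum_congr rfl (fun i _ => ?_)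
          have hd : dot (i : Pt 2).rep w = s1 i.1 * dot u1 w + s2 i.1 * dot u2 w := by
            rw [hcoords i.1 i.2, dot_add_left, dot_smul_left, dot_smul_left]
          rw [dif_pos i.2, hd, Fin.sum_univ_three]
          show _ = c₀ i * (s1 i.1 * s1 i.1) * (dot u1 w * dot u1 w)
            + c₀ i * (s1 i.1 * s2 i.1) * (2 * (dot u1 w * dot u2 w))
            + c₀ i * (s2 i.1 * s2 i.1) * (dot u2 w * dot u2 w)
          ring
      _ = ∑ k : Fin 3, (∑ i : ↥S, c₀ i * m k i) * coefw k := by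
          rw [Finset.sum_comm]
          exact Finset.sum_congr rfl (fun k _ => by rw [Finset.sum_mul])
      _ = 0 := by
          refine Finset.sum_eq_zero (fun k _ => ?_)
          rw [hmom k, zero_mul]

lemma six_dep (S : Finset (Pt 2)) (h6 : S.card = 6) (a b a' b' : V3)
    (hK : ∀ P ∈ S, dot a P.rep * dot b P.rep - dot a' P.rep * dot b' P.rep = 0)
    (hKne : ∃ v : V3, dot a v * dot b v - dot a' v * dot b' v ≠ 0) :
    ∃ c : Pt 2 → ℂ, (∃ P ∈ S, c P ≠ 0) ∧ FR 2 S c := by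
  classical
  let Kc : Fin 6 → ℂ :=
    ![a 0 * b 0 - a' 0 * b' 0, a 1 * b 1 - a' 1 * b' 1, a 2 * b 2 - a' 2 * b' 2,
      a 0 * b 1 + a 1 * b 0 - a' 0 * b' 1 - a' 1 * b' 0,
      a 0 * b 2 + a 2 * b 0 - a' 0 * b' 2 - a' 2 * b' 0,
      a 1 * b 2 + a 2 * b 1 - a' 1 * b' 2 - a' 2 * b' 1]
  let mom : Fin 6 → V3 → ℂ := fun k v =>
    ![v 0 * v 0, v 1 * v 1, v 2 * v 2, v 0 * v 1, v 0 * v 2, v 1 * v 2] k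
  have hid : ∀ v : V3, dot a v * dot b v - dot a' v * dot b' v = ∑ k : Fin 6, Kc k * mom k v := by
    intro v
    rw [Fin.sum_univ_six]
    show _ = Kc 0 * (v 0 * v 0) + Kc 1 * (v 1 * v 1) + Kc 2 * (v 2 * v 2)
      + Kc 3 * (v 0 * v 1) + Kc 4 * (v 0 * v 2) + Kc 5 * (v 1 * v 2)
    simp only [Kc, dot_expand, Matrix.cons_val_zero, Matrix.cons_val_one, Matrix.head_cons]
    show _ = (a 0 * b 0 - a' 0 * b' 0) * (v 0 * v 0) + (a 1 * b 1 - a' 1 * b' 1) * (v 1 * v 1)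
      + (a 2 * b 2 - a' 2 * b' 2) * (v 2 * v 2)
      + (a 0 * b 1 + a 1 * b 0 - a' 0 * b' 1 - a' 1 * b' 0) * (v 0 * v 1)
      + (a 0 * b 2 + a 2 * b 0 - a' 0 * b' 2 - a' 2 * b' 0) * (v 0 * v 2)
      + (a 1 * b 2 + a 2 * b 1 - a' 1 * b' 2 - a' 2 * b' 1) * (v 1 * v 2)
    ring
  have hKcne : ∃ k0 : Fin 6, Kc k0 ≠ 0 := by
    by_contra hall
    push_neg at hall
    rcases hKne with ⟨v, hv⟩
    apply hv
    rw [hid v]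
    exact Finset.sum_eq_zero (fun k _ => by rw [hall k, zero_mul])
  rcases hKcne with ⟨k0, hk0⟩
  let φ : (Fin 6 → ℂ) →ₗ[ℂ] (Fin 1 → ℂ) := momentLM (fun _ k => Kc k)
  have hφrange : LinearMap.range φ = ⊤ := by
    rw [LinearMap.range_eq_top]
    intro y
    refine ⟨(y 0 / Kc k0) • (Pi.single k0 1 : Fin 6 → ℂ), ?_⟩
    funext j
    have hj : j = 0 := Subsingleton.elim j 0
    subst hj
    rw [map_smul]
    have hval : φ (Pi.single k0 1 : Fin 6 → ℂ) 0 = Kc k0 := by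
      rw [momentLM_apply]
      rw [Finset.sum_eq_single k0]
      · simp
      · intro i _ hne; simp [Pi.single_apply, if_neg hne]
      · intro h; exact absurd (Finset.mem_univ k0) h
    simp only [Pi.smul_apply, smul_eq_mul]
    rw [hval]
    field_simp
  have hker5 : Module.finrank ℂ (LinearMap.ker φ) = 5 := by
    have := LinearMap.finrank_range_add_finrank_ker φ
    rw [hφrange, finrank_top, Module.finrank_pi, Module.finrank_pi] at this
    simp only [Fintype.card_fin] at this
    omega
  let M : Fin 6 → ↥S → ℂ := fun k i => mom k (i : Pt 2).rep
  have hmem : ∀ x : ↥S → ℂ, momentLM M x ∈ LinearMap.ker φ := by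
    intro x
    rw [LinearMap.mem_ker]
    funext j
    rw [momentLM_apply]
    calc ∑ k : Fin 6, momentLM M x k * Kc k
        = ∑ k : Fin 6, ∑ i : ↥S, x i * M k i * Kc k := by
          exact Finset.sum_congr rfl (fun k _ => by rw [momentLM_apply, Finset.sum_mul])
      _ = ∑ i : ↥S, ∑ k : Fin 6, x i * (Kc k * M k i) := by
          rw [Finset.sum_comm]
          exact Finset.sum_congr rfl (fun i _ => Finset.sum_congr rfl (fun k _ => by ring))
      _ = ∑ i : ↥S, x i * (dot a (i : Pt 2).rep * dot b (i : Pt 2).rep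
            - dot a' (i : Pt 2).rep * dot b' (i : Pt 2).rep) := by
          refine Finset.sum_congr rfl (fun i _ => ?_)
          rw [← Finset.mul_sum, ← hid]
      _ = 0 := by
          refine Finset.sum_eq_zero (fun i _ => ?_)
          rw [hK (i : Pt 2) i.2, mul_zero]
  have hcardS : Fintype.card ↥S = 6 := by rw [Fintype.card_coe, h6]
  obtain ⟨c₀, hc₀ne, hc₀⟩ := exists_ker_general (momentLM M) (LinearMap.ker φ)
    (by rw [hker5, hcardS]; omega) hmem
  refine ⟨fun P => if h : P ∈ S then c₀ ⟨P, h⟩ else 0, ?_, ?_⟩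
  · rcases Function.ne_iff.mp hc₀ne with ⟨i, hi⟩
    refine ⟨i.1, i.2, ?_⟩
    simpa [dif_pos i.2] using hi
  · intro w
    have hmom : ∀ k : Fin 6, ∑ i : ↥S, c₀ i * M k i = 0 := by
      intro k
      have := congrFun hc₀ k
      simpa [momentLM_apply] using this
    let coefw : Fin 6 → ℂ :=
      ![w 0 * w 0, w 1 * w 1, w 2 * w 2, 2 * (w 0 * w 1), 2 * (w 0 * w 2), 2 * (w 1 * w 2)]
    calc ∑ P ∈ S, (if h : P ∈ S then c₀ ⟨P, h⟩ else 0) * dot P.rep w ^ 2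
        = ∑ i ∈ S.attach, (if h : (i : Pt 2) ∈ S then c₀ ⟨i.1, h⟩ else 0) * dot (i : Pt 2).rep w ^ 2 :=
          (Finset.sum_attach S _).symm
      _ = ∑ i : ↥S, ∑ k : Fin 6, c₀ i * M k i * coefw k := by
          rw [Finset.univ_eq_attach]
          refine Finset.sum_congr rfl (fun i _ => ?_)
          have hM0 : M 0 i = (i : Pt 2).rep 0 * (i : Pt 2).rep 0 := rfl
          have hM1 : M 1 i = (i : Pt 2).rep 1 * (i : Pt 2).rep 1 := rfl
          have hM2 : M 2 i = (i : Pt 2).rep 2 * (i : Pt 2).rep 2 := rfl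
          have hM3 : M 3 i = (i : Pt 2).rep 0 * (i : Pt 2).rep 1 := rfl
          have hM4 : M 4 i = (i : Pt 2).rep 0 * (i : Pt 2).rep 2 := rfl
          have hM5 : M 5 i = (i : Pt 2).rep 1 * (i : Pt 2).rep 2 := rfl
          have hw0 : coefw 0 = w 0 * w 0 := rfl
          have hw1 : coefw 1 = w 1 * w 1 := rfl
          have hw2 : coefw 2 = w 2 * w 2 := rfl
          have hw3 : coefw 3 = 2 * (w 0 * w 1) := rfl
          have hw4 : coefw 4 = 2 * (w 0 * w 2) := rfl
          have hw5 : coefw 5 = 2 * (w 1 * w 2) := rfl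
          rw [dif_pos i.2, Subtype.coe_eta, Fin.sum_univ_six, hM0, hM1, hM2, hM3, hM4, hM5,
            hw0, hw1, hw2, hw3, hw4, hw5, dot_expand]
          ring
      _ = ∑ k : Fin 6, (∑ i : ↥S, c₀ i * M k i) * coefw k := by
          rw [Finset.sum_comm]
          exact Finset.sum_congr rfl (fun k _ => by rw [Finset.sum_mul])
      _ = 0 := by
          refine Finset.sum_eq_zero (fun k _ => ?_)
          rw [hmom k, zero_mul]


-- ============ interface to MvPolynomial and spans ============

lemma powRep_eval (j : ℕ) (P : Pt 2) (w : V3) :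
    eval w (powRep j P) = dot P.rep w ^ j := by
  have h1 : eval w (linForm P.rep) = dot P.rep w := by
    simp [linForm, dot]
  rw [powRep, map_pow, h1]

lemma sum_powRep_eq_zero_iff (j : ℕ) (S : Finset (Pt 2)) (c : Pt 2 → ℂ) :
    (∑ P ∈ S, c P • powRep j P = 0) ↔ FR j S c := by
  constructor
  · intro h w
    have := congrArg (fun p => eval w p) h
    simp only [map_sum, smul_eq_C_mul, map_mul, eval_C, map_zero] at this
    calc ∑ P ∈ S, c P * dot P.rep w ^ j
        = ∑ P ∈ S, c P * eval w (powRep j P) :=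
          Finset.sum_congr rfl (fun P _ => by rw [powRep_eval])
      _ = 0 := this
  · intro h
    apply MvPolynomial.funext
    intro x
    simp only [map_sum, smul_eq_C_mul, map_mul, eval_C, map_zero]
    calc ∑ P ∈ S, c P * eval x (powRep j P)
        = ∑ P ∈ S, c P * dot P.rep x ^ j :=
          Finset.sum_congr rfl (fun P _ => by rw [powRep_eval])
      _ = 0 := h x

lemma kruskal_le (j m : ℕ) (A : Finset (Pt 2)) (hm : m ≤ kruskalRank j A) :
    ∀ S ⊆ A, S.card ≤ m → Ind j S := by
  classical
  set Kset := {k | k ≤ A.card ∧ ∀ S ⊆ A, S.card ≤ k →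
    LinearIndependent ℂ (fun P : S => powRep j P.1)} with hKset
  have h0 : (0 : ℕ) ∈ Kset := by
    constructor
    · exact Nat.zero_le _
    · intro S hS hcard
      have hSe : S = ∅ := Finset.card_eq_zero.mp (Nat.le_zero.mp hcard)
      subst hSe
      exact linearIndependent_empty_type
  have hbdd : BddAbove Kset := ⟨A.card, fun k hk => hk.1⟩
  have hmem : kruskalRank j A ∈ Kset := Nat.sSup_mem ⟨0, h0⟩ hbdd
  intro S hS hcard c hFR P hP
  have hLI := hmem.2 S hS (le_trans hcard hm)
  rw [linearIndependent_iff'] at hLI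
  have hsum : ∑ i ∈ S.attach, (fun i : ↥S => c i.1) i • (fun P : S => powRep j P.1) i = 0 := by
    have h1 : ∑ i ∈ S.attach, c i.1 • powRep j i.1 = ∑ P ∈ S, c P • powRep j P :=
      Finset.sum_attach S (fun P => c P • powRep j P)
    rw [h1]
    exact (sum_powRep_eq_zero_iff j S c).mpr hFR
  exact hLI S.attach (fun i => c i.1) hsum ⟨P, hP⟩ (Finset.mem_attach _ _)

lemma ind_to_li (j : ℕ) (A : Finset (Pt 2)) (h : Ind j A) :
    LinearIndependent ℂ (fun P : ↥A => powRep j P.1) := by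
  classical
  rw [linearIndependent_iff']
  intro s g hsum i hi
  set c : Pt 2 → ℂ := fun P =>
    if h' : P ∈ A then (if (⟨P, h'⟩ : ↥A) ∈ s then g ⟨P, h'⟩ else 0) else 0 with hc
  have hceq : ∀ i' : ↥A, c i'.1 = if i' ∈ s then g i' else 0 := by
    intro i'
    simp only [hc, dif_pos i'.2, Subtype.coe_eta]
  have hFRc : FR j A c := by
    apply (sum_powRep_eq_zero_iff j A c).mp
    have h1 : ∑ P ∈ A, c P • powRep j P = ∑ i' ∈ A.attach, c i'.1 • powRep j i'.1 :=
      (Finset.sum_attach A (fun P => c P • powRep j P)).symm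
    rw [h1]
    have h2 : ∀ i' ∈ A.attach, c i'.1 • powRep j i'.1
        = if i' ∈ s then g i' • powRep j i'.1 else 0 := by
      intro i' _
      rw [hceq i']
      by_cases his : i' ∈ s
      · rw [if_pos his, if_pos his]
      · rw [if_neg his, if_neg his, zero_smul]
    have h3 : A.attach ∩ s = s := Finset.inter_eq_right.mpr (fun x _ => Finset.mem_attach _ _)
    rw [Finset.sum_congr rfl h2, Finset.sum_ite_mem, h3]
    exact hsum
  have := h c hFRc i.1 i.2
  rw [hceq i, if_pos hi] at this
  exact this

/-- The linear map sending coefficients on `A` to the corresponding combination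
of `(n+4)`-th powers. -/
def Phi (j : ℕ) (A : Finset (Pt 2)) : (↥A → ℂ) →ₗ[ℂ] MvPolynomial (Fin 3) ℂ where
  toFun := fun x => ∑ i : ↥A, x i • powRep j i.1
  map_add' := by
    intro x y
    simp only [Pi.add_apply, add_smul, Finset.sum_add_distrib]
  map_smul' := by
    intro s x
    simp only [Pi.smul_apply, smul_eq_mul, RingHom.id_apply, ← smul_smul, ← Finset.smul_sum]

lemma Phi_apply (j : ℕ) (A : Finset (Pt 2)) (x : ↥A → ℂ) :
    Phi j A x = ∑ i : ↥A, x i • powRep j i.1 := rfl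

lemma range_Phi (j : ℕ) (A : Finset (Pt 2)) :
    LinearMap.range (Phi j A) = Submodule.span ℂ (Set.range (fun P : ↥A => powRep j P.1)) := by
  classical
  apply le_antisymm
  · rintro p ⟨x, rfl⟩
    rw [Phi_apply]
    exact Submodule.sum_mem _ (fun i _ =>
      Submodule.smul_mem _ _ (Submodule.subset_span (Set.mem_range_self i)))
  · rw [Submodule.span_le]
    rintro p ⟨i, rfl⟩
    refine ⟨fun j' => if i = j' then 1 else 0, ?_⟩
    rw [Phi_apply]
    have h2 : ∀ i' ∈ (Finset.univ : Finset ↥A),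
        (if i = i' then (1:ℂ) else 0) • powRep j i'.1 = if i = i' then powRep j i'.1 else 0 := by
      intro i' _
      by_cases h : i = i'
      · rw [if_pos h, if_pos h, one_smul]
      · rw [if_neg h, if_neg h, zero_smul]
    rw [Finset.sum_congr rfl h2, Finset.sum_ite_eq, if_pos (Finset.mem_univ i)]

/-- Core of Part 1: the `(n+4)`-th powers of `A` lie in the span of those of `B`,
hence `|A| ≤ |B|`. -/
lemma span_core (n : ℕ) (A B : Finset (Pt 2)) (a b : Pt 2 → ℂ)
    (hIA4 : Ind (n + 4) A) (haz : ∀ P ∈ A, a P ≠ 0)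
    (hAB : ∀ w : V3, ∑ P ∈ A, a P * dot P.rep w ^ ((n + 4) + (n + 4))
      = ∑ Q ∈ B, b Q * dot Q.rep w ^ ((n + 4) + (n + 4))) :
    A.card ≤ B.card ∧
      Submodule.span ℂ (Set.range (fun P : ↥A => powRep (n + 4) P.1)) ≤
        Submodule.span ℂ ((powRep (n + 4)) '' (B : Set (Pt 2))) := by
  classical
  have hmaster := contract A B a b (n + 4) (n + 4) hAB
  -- polynomial identity for each contraction
  have hE : ∀ u : V3, ∑ P ∈ A, (a P * dot P.rep u ^ (n + 4)) • powRep (n + 4) P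
      = ∑ Q ∈ B, (b Q * dot Q.rep u ^ (n + 4)) • powRep (n + 4) Q := by
    intro u
    apply MvPolynomial.funext
    intro x
    simp only [map_sum, smul_eq_C_mul, map_mul, eval_C]
    calc ∑ P ∈ A, a P * dot P.rep u ^ (n + 4) * eval x (powRep (n + 4) P)
        = ∑ P ∈ A, a P * (dot P.rep u ^ (n + 4) * dot P.rep x ^ (n + 4)) :=
          Finset.sum_congr rfl (fun P _ => by rw [powRep_eval]; ring)
      _ = ∑ Q ∈ B, b Q * (dot Q.rep u ^ (n + 4) * dot Q.rep x ^ (n + 4)) := hmaster u x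
      _ = ∑ Q ∈ B, b Q * dot Q.rep u ^ (n + 4) * eval x (powRep (n + 4) Q) :=
          Finset.sum_congr rfl (fun Q _ => by rw [powRep_eval]; ring)
  -- the coefficient vectors span everything
  set g : V3 → (↥A → ℂ) := fun u i => a i.1 * dot i.1.rep u ^ (n + 4) with hg
  set N : Submodule ℂ (↥A → ℂ) := Submodule.span ℂ (Set.range g) with hN
  have hNtop : N = ⊤ := by
    by_contra hne
    have hlt : N < ⊤ := lt_top_iff_ne_top.mpr hne
    obtain ⟨f, hf0, hfmap⟩ := Submodule.exists_dual_map_eq_bot_of_lt_top hlt inferInstance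
    set cf : ↥A → ℂ := fun i => f (fun j' => if i = j' then 1 else 0) with hcf
    have hfx : ∀ x : ↥A → ℂ, f x = ∑ i : ↥A, x i * cf i := by
      intro x
      conv_lhs => rw [pi_eq_sum_univ x]
      rw [map_sum]
      exact Finset.sum_congr rfl (fun i _ => by rw [map_smul]; rfl)
    have hfvanish : ∀ u : V3, f (g u) = 0 := by
      intro u
      have hmem : g u ∈ N := Submodule.subset_span (Set.mem_range_self u)
      have : f (g u) ∈ Submodule.map f N := Submodule.mem_map_of_mem hmem
      rw [hfmap] at this
      exact (Submodule.mem_bot ℂ).mp this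
    -- this gives a relation, hence cf = 0, hence f = 0
    set c' : Pt 2 → ℂ := fun P => if h' : P ∈ A then a P * cf ⟨P, h'⟩ else 0 with hc'
    have hFRc' : FR (n + 4) A c' := by
      intro w
      have h1 : ∑ P ∈ A, c' P * dot P.rep w ^ (n + 4)
          = ∑ i ∈ A.attach, c' i.1 * dot (i : Pt 2).rep w ^ (n + 4) :=
        (Finset.sum_attach A _).symm
      rw [h1]
      have h2 := hfvanish w
      rw [hfx] at h2
      rw [← h2, Finset.univ_eq_attach]
      refine Finset.sum_congr rfl (fun i _ => ?_)
      simp only [hc', dif_pos i.2, Subtype.coe_eta, hg]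
      ring
    have hcf0 : ∀ i : ↥A, cf i = 0 := by
      intro i
      have := hIA4 c' hFRc' i.1 i.2
      simp only [hc', dif_pos i.2, Subtype.coe_eta] at this
      rcases mul_eq_zero.mp this with h' | h'
      · exact absurd h' (haz i.1 i.2)
      · exact h'
    apply hf0
    apply LinearMap.ext
    intro x
    rw [hfx]
    simp [hcf0]
  -- move through Phi
  have hPhiN : Submodule.map (Phi (n + 4) A) N ≤
      Submodule.span ℂ ((powRep (n + 4)) '' (B : Set (Pt 2))) := by
    rw [hN, Submodule.map_span, Submodule.span_le]
    rintro p ⟨q, ⟨u, rfl⟩, rfl⟩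
    have hPhig : Phi (n + 4) A (g u) = ∑ Q ∈ B, (b Q * dot Q.rep u ^ (n + 4)) • powRep (n + 4) Q := by
      rw [Phi_apply, ← hE u]
      rw [Finset.univ_eq_attach]
      exact Finset.sum_attach A (fun P => (a P * dot P.rep u ^ (n + 4)) • powRep (n + 4) P)
    rw [hPhig]
    exact Submodule.sum_mem _ (fun Q hQ => Submodule.smul_mem _ _
      (Submodule.subset_span (Set.mem_image_of_mem _ (Finset.mem_coe.mpr hQ))))
  have hrange_le : Submodule.span ℂ (Set.range (fun P : ↥A => powRep (n + 4) P.1)) ≤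
      Submodule.span ℂ ((powRep (n + 4)) '' (B : Set (Pt 2))) := by
    rw [← range_Phi]
    rw [← Submodule.map_top]
    rw [← hNtop]
    exact hPhiN
  constructor
  · -- cardinality
    have hli := ind_to_li (n + 4) A hIA4
    have hfr1 : Module.finrank ℂ
        (Submodule.span ℂ (Set.range (fun P : ↥A => powRep (n + 4) P.1))) = A.card := by
      rw [finrank_span_eq_card hli, Fintype.card_coe]
    have hsets : (powRep (n + 4)) '' (B : Set (Pt 2))
        = Set.range (fun P : ↥B => powRep (n + 4) P.1) := Set.image_eq_range _ _
    have hrangeB : Submodule.span ℂ ((powRep (n + 4)) '' (B : Set (Pt 2)))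
        = LinearMap.range (Phi (n + 4) B) := by
      rw [hsets, ← range_Phi]
    haveI : Module.Finite ℂ (LinearMap.range (Phi (n + 4) B)) := inferInstance
    have hfr2 : Module.finrank ℂ (LinearMap.range (Phi (n + 4) B)) ≤ B.card := by
      calc Module.finrank ℂ (LinearMap.range (Phi (n + 4) B))
          ≤ Module.finrank ℂ (↥B → ℂ) := LinearMap.finrank_range_le _
        _ = B.card := by rw [Module.finrank_pi, Fintype.card_coe]
    have hmono : Module.finrank ℂ
        (Submodule.span ℂ (Set.range (fun P : ↥A => powRep (n + 4) P.1)))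
        ≤ Module.finrank ℂ (LinearMap.range (Phi (n + 4) B)) := by
      apply Submodule.finrank_mono
      rw [← hrangeB]
      exact hrange_le
    omega
  · exact hrange_le


-- ============ helpers for the uniqueness argument ============

lemma dot_zero_right (v : V3) : dot v 0 = 0 := by simp [dot]

lemma dot_comb_right (v a b : V3) (s t : ℂ) :
    dot v (s • a + t • b) = s * dot v a + t * dot v b := by
  simp [dot_expand, Pi.add_apply, Pi.smul_apply, smul_eq_mul]; ring

lemma dot_comb_left (a b v : V3) (s t : ℂ) :
    dot (s • a + t • b) v = s * dot a v + t * dot b v := by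
  simp [dot_expand, Pi.add_apply, Pi.smul_apply, smul_eq_mul]; ring

lemma exists_single_nonprop (y : V3) (hy : y ≠ 0) :
    ∃ j : Fin 3, ∀ t : ℂ, (Pi.single j 1 : V3) ≠ t • y := by
  rcases exists_coord_ne y hy with ⟨j0, hj0⟩
  have key : ∀ j : Fin 3, j ≠ j0 → ∀ t : ℂ, (Pi.single j 1 : V3) ≠ t • y := by
    intro j hj t ht
    have h1 : (Pi.single j (1:ℂ) : V3) j0 = t * y j0 := by rw [ht]; rfl
    rw [Pi.single_apply, if_neg (Ne.symm hj)] at h1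
    have ht0 : t = 0 := by
      rcases mul_eq_zero.mp h1.symm with h | h
      · exact h
      · exact absurd h hj0
    have h2 : (Pi.single j (1:ℂ) : V3) j = t * y j := by rw [ht]; rfl
    rw [Pi.single_eq_same, ht0, zero_mul] at h2
    exact one_ne_zero h2
  by_cases h0 : j0 = 0
  · exact ⟨1, key 1 (by rw [h0]; decide)⟩
  · exact ⟨0, key 0 (fun h => h0 h.symm)⟩

lemma exists_cross_base (x : V3) (hx : x ≠ 0) : ∃ g : V3, g ≠ 0 ∧ dot g x = 0 := by
  rcases exists_single_nonprop x hx with ⟨j, hj⟩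
  refine ⟨cross x (Pi.single j 1), cross_ne_zero x _ hx hj, ?_⟩
  exact dot_cross_left x _

lemma exists_cross_sol (x y : V3) : ∃ g : V3, g ≠ 0 ∧ dot g x = 0 ∧ dot g y = 0 := by
  by_cases hx : x = 0
  · by_cases hy : y = 0
    · refine ⟨Pi.single 0 1, ?_, by rw [hx]; exact dot_zero_right _, by rw [hy]; exact dot_zero_right _⟩
      intro h
      have := congrFun h 0
      rw [Pi.single_eq_same] at this
      exact one_ne_zero this
    · rcases exists_cross_base y hy with ⟨g, hg, hgy⟩
      exact ⟨g, hg, by rw [hx]; exact dot_zero_right _, hgy⟩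
  · by_cases hc : cross x y = 0
    · rcases cross_eq_zero x y hx hc with ⟨t, ht⟩
      rcases exists_cross_base x hx with ⟨g, hg, hgx⟩
      refine ⟨g, hg, hgx, ?_⟩
      rw [ht, dot_comm, dot_smul_left, dot_comm, hgx, mul_zero]
    · exact ⟨cross x y, hc, dot_cross_left x y, dot_cross_right x y⟩

lemma lin_poly_zero (α β : ℂ) (h : ∀ s : ℂ, α + β * s = 0) : α = 0 ∧ β = 0 := by
  have h0 := h 0
  have h1 := h 1
  constructor
  · simpa using h0
  · have : α = 0 := by simpa using h0
    rw [this] at h1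
    simpa using h1

/-- Product of two affine functions vanishing identically. -/
lemma affine_prod_zero (p q p' q' : ℂ) (h : ∀ s : ℂ, (p + q * s) * (p' + q' * s) = 0) :
    (p = 0 ∧ q = 0) ∨ (p' = 0 ∧ q' = 0) := by
  classical
  set f : Polynomial ℂ := Polynomial.C p + Polynomial.C q * Polynomial.X
  set g : Polynomial ℂ := Polynomial.C p' + Polynomial.C q' * Polynomial.X
  have hfg : f * g = 0 := by
    apply Polynomial.funext
    intro s
    simp only [f, g, Polynomial.eval_mul, Polynomial.eval_add, Polynomial.eval_C,
      Polynomial.eval_mul, Polynomial.eval_X, Polynomial.eval_zero]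
    exact h s
  rcases mul_eq_zero.mp hfg with h0 | h0
  · left
    constructor
    · have := congrArg (fun r => Polynomial.coeff r 0) h0
      simpa [f] using this
    · have := congrArg (fun r => Polynomial.coeff r 1) h0
      simpa [f] using this
  · right
    constructor
    · have := congrArg (fun r => Polynomial.coeff r 0) h0
      simpa [g] using this
    · have := congrArg (fun r => Polynomial.coeff r 1) h0
      simpa [g] using this

lemma FR_comb3 {j : ℕ} {S : Finset (Pt 2)} {w x y : Pt 2 → ℂ}
    (hw : FR j S w) (hx : FR j S x) (hy : FR j S y) (α β γ : ℂ) :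
    FR j S (fun P => α * w P + β * x P + γ * y P) := by
  intro v
  have hsplit : ∑ P ∈ S, (α * w P + β * x P + γ * y P) * dot P.rep v ^ j
      = α * (∑ P ∈ S, w P * dot P.rep v ^ j) + β * (∑ P ∈ S, x P * dot P.rep v ^ j)
        + γ * (∑ P ∈ S, y P * dot P.rep v ^ j) := by
    rw [Finset.mul_sum, Finset.mul_sum, Finset.mul_sum, ← Finset.sum_add_distrib,
      ← Finset.sum_add_distrib]
    exact Finset.sum_congr rfl (fun P _ => by ring)
  rw [hsplit, hw v, hx v, hy v]
  ring

/-- From the power representation of an external point, contracted relations. -/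
lemma hwrel_of (n : ℕ) (A : Finset (Pt 2)) (Q : Pt 2) (hQA : Q ∉ A) (c : Pt 2 → ℂ)
    (hc : ∀ w : V3, dot Q.rep w ^ (n + 4) = ∑ P ∈ A, c P * dot P.rep w ^ (n + 4)) :
    ∀ u : V3, dot u Q.rep = 0 → FR (n + 3) A (fun P => c P * dot P.rep u) := by
  classical
  intro u hu
  set e : Pt 2 → ℂ := fun R => if R = Q then -1 else c R with he
  have hFRe : FR (n + 4) (insert Q A) e := by
    intro w
    rw [Finset.sum_insert hQA]
    have h1 : e Q = -1 := by rw [he]; simp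
    have h2 : ∑ P ∈ A, e P * dot P.rep w ^ (n + 4) = ∑ P ∈ A, c P * dot P.rep w ^ (n + 4) := by
      refine Finset.sum_congr rfl (fun P hP => ?_)
      have : P ≠ Q := fun hPQ => hQA (hPQ ▸ hP)
      rw [he]; simp [this]
    rw [h1, h2, ← hc w]
    ring
  have hcontr : FR (n + 3) (insert Q A) (fun R => e R * dot R.rep u) := contract_rel hFRe u
  have hA : FR (n + 3) A (fun R => e R * dot R.rep u) := by
    refine (FR_congr_support (Finset.subset_insert Q A) ?_).mpr hcontr
    intro R hR hRn
    have : R = Q := by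
      rcases Finset.mem_insert.mp hR with h | h
      · exact h
      · exact absurd h hRn
    rw [this, dot_comm, hu, mul_zero]
  intro w
  rw [← hA w]
  refine Finset.sum_congr rfl (fun P hP => ?_)
  have : P ≠ Q := fun hPQ => hQA (hPQ ▸ hP)
  rw [he]; simp [this]

/-- Structure of an external point whose `(n+4)`-th power lies in the span of `A`. -/
lemma Qstruct (n : ℕ) (A : Finset (Pt 2))
    (hI2 : ∀ S ⊆ A, S.card ≤ min 6 A.card → Ind 2 S)
    (hI3 : ∀ S ⊆ A, S.card ≤ min A.card (3 * n + 9) → Ind (n + 3) S)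
    (hr : A.card ≤ 3 * n + 11)
    (Q : Pt 2) (hQA : Q ∉ A) (c : Pt 2 → ℂ)
    (hc : ∀ w : V3, dot Q.rep w ^ (n + 4) = ∑ P ∈ A, c P * dot P.rep w ^ (n + 4)) :
    (∀ u : V3, dot u Q.rep = 0 → u ≠ 0 → ∃ P ∈ A, c P * dot P.rep u ≠ 0) ∧
      3 * n + 10 ≤ (A.filter (fun P => c P ≠ 0)).card ∧ A.card = 3 * n + 11 := by
  classical
  set Sc := A.filter (fun P => c P ≠ 0) with hSc
  -- the support is not small
  have hSc5 : n + 5 ≤ Sc.card := by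
    by_contra hlt
    push_neg at hlt
    set e : Pt 2 → ℂ := fun R => if R = Q then -1 else c R with he
    have hQSc : Q ∉ Sc := fun h => hQA (Finset.mem_of_mem_filter Q h)
    have hFRe : FR (n + 4) (insert Q Sc) e := by
      intro w
      rw [Finset.sum_insert hQSc]
      have h1 : e Q = -1 := by rw [he]; simp
      have h2 : ∑ P ∈ Sc, e P * dot P.rep w ^ (n + 4)
          = ∑ P ∈ A, c P * dot P.rep w ^ (n + 4) := by
        rw [Finset.sum_subset (Finset.filter_subset _ A) (fun P hP hPn => by
          have hPQ : P ≠ Q := fun hPQ => hQA (hPQ ▸ hP)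
          have hc0 : c P = 0 := by
            by_contra hcc
            exact hPn (Finset.mem_filter.mpr ⟨hP, hcc⟩)
          rw [he]
          simp [hPQ, hc0])]
        refine Finset.sum_congr rfl (fun P hP => ?_)
        have hPQ : P ≠ Q := fun hPQ => hQA (hPQ ▸ hP)
        rw [he]; simp [hPQ]
      rw [h1, h2, ← hc w]
      ring
    have hcard : (insert Q Sc).card ≤ (n + 4) + 1 := by
      rw [Finset.card_insert_of_notMem hQSc]
      omega
    have := Ind_univ (n + 4) (insert Q Sc) hcard e hFRe Q (Finset.mem_insert_self Q Sc)
    rw [he] at this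
    simp at this
  -- hstar
  have hstar : ∀ u : V3, dot u Q.rep = 0 → u ≠ 0 → ∃ P ∈ A, c P * dot P.rep u ≠ 0 := by
    intro u hu hune
    by_contra hall
    push_neg at hall
    have hperp : ∀ P ∈ Sc, dot P.rep u = 0 := by
      intro P hP
      rcases Finset.mem_filter.mp hP with ⟨hPA, hPc⟩
      rcases mul_eq_zero.mp (hall P hPA) with h | h
      · exact absurd h hPc
      · exact h
    obtain ⟨S₄, hS₄sub, hS₄card⟩ := Finset.exists_subset_card_eq (s := Sc) (n := 4) (le_trans (by omega : 4 ≤ n + 5) hSc5)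
    obtain ⟨c₄, ⟨Pw, hPw, hPwne⟩, hFR₄⟩ := four_dep S₄ hS₄card u hune
      (fun P hP => hperp P (hS₄sub hP))
    have hS₄A : S₄ ⊆ A := hS₄sub.trans (Finset.filter_subset _ A)
    have hScA : Sc.card ≤ A.card := Finset.card_le_card (Finset.filter_subset _ A : Sc ⊆ A)
    have hrA : 5 ≤ A.card := by omega
    have hminOK : S₄.card ≤ min 6 A.card := by
      rw [hS₄card]
      exact le_min_iff.mpr ⟨by omega, by omega⟩
    exact hPwne (hI2 S₄ hS₄A hminOK c₄ hFR₄ Pw hPw)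
  -- support bound for contracted relations
  have hwrel := hwrel_of n A Q hQA c hc
  have hsupp_w : ∀ u : V3, dot u Q.rep = 0 → u ≠ 0 →
      3 * n + 10 ≤ (A.filter (fun P => c P * dot P.rep u ≠ 0)).card := by
    intro u hu hune
    set w := fun P => c P * dot P.rep u with hwdef
    set Sw := A.filter (fun P => w P ≠ 0) with hSw
    have hFRSw : FR (n + 3) Sw w := by
      refine (FR_congr_support (Finset.filter_subset _ A) ?_).mpr (hwrel u hu)
      intro P hP hPn
      by_contra h0
      exact hPn (Finset.mem_filter.mpr ⟨hP, h0⟩)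
    have hSwA : Sw ⊆ A := Finset.filter_subset _ A
    by_contra hlt
    push_neg at hlt
    have hcard : Sw.card ≤ min A.card (3 * n + 9) := by
      rcases le_or_gt A.card (3 * n + 9) with hcase | hcase
      · exact le_min_iff.mpr ⟨Finset.card_le_card hSwA, le_trans (Finset.card_le_card hSwA) hcase⟩
      · exact le_min_iff.mpr ⟨le_trans (by omega) (le_of_lt hcase), by omega⟩
    have hzero := hI3 Sw hSwA hcard w hFRSw
    rcases hstar u hu hune with ⟨P, hPA, hPne⟩
    have hPSw : P ∈ Sw := Finset.mem_filter.mpr ⟨hPA, hPne⟩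
    exact hPne (hzero P hPSw)
  -- perp basis at Q, first relation gives the support bound for c
  obtain ⟨u1, u2, hu1, hu2, hind, _⟩ := perp_basis Q.rep (Pt2_rep_ne_zero Q)
  have hu1ne : u1 ≠ 0 := by
    intro h
    rcases hind 1 0 (by rw [h]; simp) with ⟨h1, _⟩
    exact one_ne_zero h1
  have hsupp1 := hsupp_w u1 hu1 hu1ne
  have hsuppc : 3 * n + 10 ≤ Sc.card := by
    refine le_trans hsupp1 (Finset.card_le_card ?_)
    intro P hP
    rcases Finset.mem_filter.mp hP with ⟨hPA, hPne⟩
    refine Finset.mem_filter.mpr ⟨hPA, ?_⟩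
    intro h0
    exact hPne (by rw [h0, zero_mul])
  have hrlow : 3 * n + 10 ≤ A.card :=
    le_trans hsuppc (Finset.card_le_card (Finset.filter_subset _ A))
  -- exclude A.card = 3n+10
  have hr11 : A.card = 3 * n + 11 := by
    rcases Nat.lt_or_ge A.card (3 * n + 11) with hcase | hcase
    · exfalso
      have hreq : A.card = 3 * n + 10 := by omega
      -- pick a point in the support of w1
      have hpos : 0 < (A.filter (fun P => c P * dot P.rep u1 ≠ 0)).card := by omega
      obtain ⟨P₁, hP₁⟩ := Finset.card_pos.mp hpos
      rcases Finset.mem_filter.mp hP₁ with ⟨hP₁A, hP₁ne⟩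
      set s := c P₁ * dot P₁.rep u2 with hs
      set t := -(c P₁ * dot P₁.rep u1) with ht
      have htne : t ≠ 0 := by rw [ht]; simpa using hP₁ne
      set u' := s • u1 + t • u2 with hu'
      have hu'Q : dot u' Q.rep = 0 := by
        rw [hu', dot_comb_left, hu1, hu2]; ring
      have hu'ne : u' ≠ 0 := by
        intro h
        rcases hind s t (hu' ▸ h) with ⟨_, ht0⟩
        exact htne ht0
      have hsupp' := hsupp_w u' hu'Q hu'ne
      have heq : A.filter (fun P => c P * dot P.rep u' ≠ 0) = A := by
        apply Finset.eq_of_subset_of_card_le (Finset.filter_subset _ A)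
        omega
      have hP₁mem : P₁ ∈ A.filter (fun P => c P * dot P.rep u' ≠ 0) := by
        rw [heq]; exact hP₁A
      have hval : c P₁ * dot P₁.rep u' = 0 := by
        rw [hu', dot_comb_right, hs, ht]
        ring
      exact (Finset.mem_filter.mp hP₁mem).2 hval
    · omega
  exact ⟨hstar, hsuppc, hr11⟩


-- ============ the conic is nontrivial ============

lemma K_ne_zero (a1 a2 mu mu' q1 q2 : V3) (hq1 : q1 ≠ 0)
    (hnp : ∀ t : ℂ, q2 ≠ t • q1)
    (ha1 : dot a1 q1 = 0) (ha2 : dot a2 q1 = 0)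
    (haind : ∀ s t : ℂ, s • a1 + t • a2 = 0 → s = 0 ∧ t = 0)
    (hmq : dot mu q2 = 0) (hm'q : dot mu' q2 = 0)
    (hmne : mu ≠ 0) (hm'ne : mu' ≠ 0) :
    ∃ v : V3, dot a1 v * dot mu' v - dot a2 v * dot mu v ≠ 0 := by
  by_contra hco
  push_neg at hco
  have ha1ne : a1 ≠ 0 := by
    intro h
    rcases haind 1 0 (by rw [h]; simp) with ⟨h1, _⟩
    exact one_ne_zero h1
  have ha2ne : a2 ≠ 0 := by
    intro h
    rcases haind 0 1 (by rw [h]; simp) with ⟨_, h1⟩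
    exact one_ne_zero h1
  have hpar_contra : ∀ t : ℂ, a2 = t • a1 → False := by
    intro t ht
    rcases haind t (-1) (by rw [ht]; module) with ⟨_, h1⟩
    norm_num at h1
  have hpar_contra' : ∀ t : ℂ, a1 = t • a2 → False := by
    intro t ht
    rcases haind (-1) t (by rw [ht]; module) with ⟨h1, _⟩
    norm_num at h1
  -- work on the perp plane of a1
  have hmu_eq : ∃ τ : ℂ, mu = τ • a1 := by
    obtain ⟨z1, z2, hz1, hz2, hzind, _⟩ := perp_basis a1 ha1ne
    have hstep : (dot a2 z1 = 0 ∧ dot a2 z2 = 0) ∨ (dot mu z1 = 0 ∧ dot mu z2 = 0) := by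
      apply affine_prod_zero
      intro s
      have e1 : dot a1 z1 = 0 := by rw [dot_comm]; exact hz1
      have e2 : dot a1 z2 = 0 := by rw [dot_comm]; exact hz2
      have hv : dot a1 (z1 + s • z2) = 0 := by rw [dot_lin, e1, e2]; ring
      have h0 := hco (z1 + s • z2)
      rw [hv, zero_mul, zero_sub, neg_eq_zero] at h0
      rw [dot_lin, dot_lin] at h0
      exact h0
    rcases hstep with ⟨hA, hB⟩ | ⟨hA, hB⟩
    · exfalso
      obtain ⟨t, ht⟩ := double_perp z1 z2 a2 a1 hzind ha1ne
        (by rw [dot_comm]; exact hA) (by rw [dot_comm]; exact hB) hz1 hz2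
      exact hpar_contra t ht
    · exact double_perp z1 z2 mu a1 hzind ha1ne
        (by rw [dot_comm]; exact hA) (by rw [dot_comm]; exact hB) hz1 hz2
  have hmu'_eq : ∃ τ : ℂ, mu' = τ • a2 := by
    obtain ⟨z1, z2, hz1, hz2, hzind, _⟩ := perp_basis a2 ha2ne
    have hstep : (dot a1 z1 = 0 ∧ dot a1 z2 = 0) ∨ (dot mu' z1 = 0 ∧ dot mu' z2 = 0) := by
      apply affine_prod_zero
      intro s
      have e1 : dot a2 z1 = 0 := by rw [dot_comm]; exact hz1
      have e2 : dot a2 z2 = 0 := by rw [dot_comm]; exact hz2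
      have hv : dot a2 (z1 + s • z2) = 0 := by rw [dot_lin, e1, e2]; ring
      have h0 := hco (z1 + s • z2)
      rw [hv, zero_mul, sub_zero] at h0
      rw [dot_lin, dot_lin] at h0
      exact h0
    rcases hstep with ⟨hA, hB⟩ | ⟨hA, hB⟩
    · exfalso
      obtain ⟨t, ht⟩ := double_perp z1 z2 a1 a2 hzind ha2ne
        (by rw [dot_comm]; exact hA) (by rw [dot_comm]; exact hB) hz1 hz2
      exact hpar_contra' t ht
    · exact double_perp z1 z2 mu' a2 hzind ha2ne
        (by rw [dot_comm]; exact hA) (by rw [dot_comm]; exact hB) hz1 hz2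
  rcases hmu_eq with ⟨τ, hτ⟩
  rcases hmu'_eq with ⟨τ', hτ'⟩
  have hτ0 : τ ≠ 0 := by
    intro h; rw [h, zero_smul] at hτ; exact hmne hτ
  have hτ'0 : τ' ≠ 0 := by
    intro h; rw [h, zero_smul] at hτ'; exact hm'ne hτ'
  have hq2a1 : dot a1 q2 = 0 := by
    have := hmq
    rw [hτ, dot_smul_left] at this
    rcases mul_eq_zero.mp this with h | h
    · exact absurd h hτ0
    · exact h
  have hq2a2 : dot a2 q2 = 0 := by
    have := hm'q
    rw [hτ', dot_smul_left] at this
    rcases mul_eq_zero.mp this with h | h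
    · exact absurd h hτ'0
    · exact h
  obtain ⟨t, ht⟩ := double_perp a1 a2 q2 q1 haind hq1 hq2a1 hq2a2 ha1 ha2
  exact hnp t ht

-- ============ the final contradiction for two external points ============

lemma finale (n : ℕ) (A : Finset (Pt 2))
    (hI2 : ∀ S ⊆ A, S.card ≤ min 6 A.card → Ind 2 S)
    (hI3 : ∀ S ⊆ A, S.card ≤ min A.card (3 * n + 9) → Ind (n + 3) S)
    (hr11 : A.card = 3 * n + 11)
    (Q₁ Q₂ : Pt 2) (hQne : Q₁ ≠ Q₂) (hQ₁A : Q₁ ∉ A) (hQ₂A : Q₂ ∉ A)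
    (c₁ c₂ : Pt 2 → ℂ)
    (hc₁ : ∀ w : V3, dot Q₁.rep w ^ (n + 4) = ∑ P ∈ A, c₁ P * dot P.rep w ^ (n + 4))
    (hc₂ : ∀ w : V3, dot Q₂.rep w ^ (n + 4) = ∑ P ∈ A, c₂ P * dot P.rep w ^ (n + 4))
    (hstar₁ : ∀ u : V3, dot u Q₁.rep = 0 → u ≠ 0 → ∃ P ∈ A, c₁ P * dot P.rep u ≠ 0)
    (hstar₂ : ∀ u : V3, dot u Q₂.rep = 0 → u ≠ 0 → ∃ P ∈ A, c₂ P * dot P.rep u ≠ 0)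
    (hsupp₁ : 3 * n + 10 ≤ (A.filter (fun P => c₁ P ≠ 0)).card)
    (hsupp₂ : 3 * n + 10 ≤ (A.filter (fun P => c₂ P ≠ 0)).card) : False := by
  classical
  obtain ⟨a1, a2, ha1, ha2, haind, _⟩ := perp_basis Q₁.rep (Pt2_rep_ne_zero Q₁)
  obtain ⟨b1, b2, hb1, hb2, hbind, _⟩ := perp_basis Q₂.rep (Pt2_rep_ne_zero Q₂)
  have hwrel₁ := hwrel_of n A Q₁ hQ₁A c₁ hc₁
  have hwrel₂ := hwrel_of n A Q₂ hQ₂A c₂ hc₂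
  have ha1ne : a1 ≠ 0 := by
    intro h; rcases haind 1 0 (by rw [h]; simp) with ⟨h1, _⟩; exact one_ne_zero h1
  have ha2ne : a2 ≠ 0 := by
    intro h; rcases haind 0 1 (by rw [h]; simp) with ⟨_, h1⟩; exact one_ne_zero h1
  obtain ⟨P₁, hP₁, P₂, hP₂, hP12⟩ := Finset.one_lt_card.mp (by omega : 1 < A.card)
  -- combining three relations
  have combine : ∀ w x y : Pt 2 → ℂ, FR (n + 3) A w → FR (n + 3) A x → FR (n + 3) A y →
      ∃ g : V3, g ≠ 0 ∧ ∀ P ∈ A, g 0 * w P + g 1 * x P + g 2 * y P = 0 := by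
    intro w x y hw hx hy
    obtain ⟨g, hgne, hg1, hg2⟩ := exists_cross_sol ![w P₁, x P₁, y P₁] ![w P₂, x P₂, y P₂]
    refine ⟨g, hgne, ?_⟩
    have hFRz : FR (n + 3) A (fun P => g 0 * w P + g 1 * x P + g 2 * y P) :=
      FR_comb3 hw hx hy (g 0) (g 1) (g 2)
    have hzP₁ : g 0 * w P₁ + g 1 * x P₁ + g 2 * y P₁ = 0 := by
      rw [dot_expand] at hg1
      exact hg1
    have hzP₂ : g 0 * w P₂ + g 1 * x P₂ + g 2 * y P₂ = 0 := by
      rw [dot_expand] at hg2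
      exact hg2
    have hP₂mem : P₂ ∈ A.erase P₁ := Finset.mem_erase.mpr ⟨Ne.symm hP12, hP₂⟩
    have hFRrest : FR (n + 3) ((A.erase P₁).erase P₂) (fun P => g 0 * w P + g 1 * x P + g 2 * y P) := by
      refine (FR_congr_support ((Finset.erase_subset _ _).trans (Finset.erase_subset _ _)) ?_).mpr hFRz
      intro P hPA hPn
      by_cases h1 : P = P₁
      · rw [h1]; exact hzP₁
      · by_cases h2 : P = P₂
        · rw [h2]; exact hzP₂
        · exact absurd (Finset.mem_erase.mpr ⟨h2, Finset.mem_erase.mpr ⟨h1, hPA⟩⟩) hPn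
    have hcard : ((A.erase P₁).erase P₂).card ≤ min A.card (3 * n + 9) := by
      rw [Finset.card_erase_of_mem hP₂mem, Finset.card_erase_of_mem hP₁]
      have hmin : min A.card (3 * n + 9) = 3 * n + 9 := min_eq_right (by omega)
      omega
    have hzero := hI3 _ ((Finset.erase_subset _ _).trans (Finset.erase_subset _ _)) hcard _ hFRrest
    intro P hP
    by_cases h1 : P = P₁
    · rw [h1]; exact hzP₁
    · by_cases h2 : P = P₂
      · rw [h2]; exact hzP₂
      · exact hzero P (Finset.mem_erase.mpr ⟨h2, Finset.mem_erase.mpr ⟨h1, hP⟩⟩)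
  have hFRx : FR (n + 3) A (fun P => c₂ P * dot P.rep b1) := hwrel₂ b1 hb1
  have hFRy : FR (n + 3) A (fun P => c₂ P * dot P.rep b2) := hwrel₂ b2 hb2
  -- representing a Q₁-relation by a Q₂-relation
  have getMu : ∀ u : V3, dot u Q₁.rep = 0 → u ≠ 0 →
      ∃ m : V3, dot m Q₂.rep = 0 ∧ ∀ P ∈ A, c₁ P * dot P.rep u = c₂ P * dot P.rep m := by
    intro u hu hune
    obtain ⟨g, hgne, hg⟩ := combine (fun P => c₁ P * dot P.rep u)
      (fun P => c₂ P * dot P.rep b1) (fun P => c₂ P * dot P.rep b2)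
      (hwrel₁ u hu) hFRx hFRy
    by_cases hg0 : g 0 = 0
    · exfalso
      have hg12 : ¬(g 1 = 0 ∧ g 2 = 0) := by
        rintro ⟨h1, h2⟩
        exact hgne (V3_ext hg0 h1 h2)
      set u'' := g 1 • b1 + g 2 • b2 with hu''
      have hu''Q : dot u'' Q₂.rep = 0 := by rw [hu'', dot_comb_left, hb1, hb2]; ring
      have hu''ne : u'' ≠ 0 := fun h => hg12 (hbind (g 1) (g 2) (hu'' ▸ h))
      obtain ⟨P, hPA, hPne⟩ := hstar₂ u'' hu''Q hu''ne
      apply hPne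
      have hgP := hg P hPA
      rw [hg0, zero_mul, zero_add] at hgP
      rw [hu'', dot_comb_right]
      linear_combination hgP
    · set m := (-(g 1) / g 0) • b1 + (-(g 2) / g 0) • b2 with hm
      refine ⟨m, by rw [hm, dot_comb_left, hb1, hb2]; ring, ?_⟩
      intro P hPA
      have hgP := hg P hPA
      have hdm : dot P.rep m = (-(g 1) * dot P.rep b1 + -(g 2) * dot P.rep b2) / g 0 := by
        rw [hm, dot_comb_right, div_mul_eq_mul_div, div_mul_eq_mul_div, ← add_div]
      rw [hdm, ← mul_div_assoc, eq_div_iff hg0]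
      linear_combination hgP
  obtain ⟨m, hmQ, hmw⟩ := getMu a1 ha1 ha1ne
  obtain ⟨m', hm'Q, hm'w⟩ := getMu a2 ha2 ha2ne
  have hmne : m ≠ 0 := by
    intro h
    obtain ⟨P, hPA, hPne⟩ := hstar₁ a1 ha1 ha1ne
    apply hPne
    rw [hmw P hPA, h, dot_zero_right, mul_zero]
  have hm'ne : m' ≠ 0 := by
    intro h
    obtain ⟨P, hPA, hPne⟩ := hstar₁ a2 ha2 ha2ne
    apply hPne
    rw [hm'w P hPA, h, dot_zero_right, mul_zero]
  have hKne := K_ne_zero a1 a2 m m' Q₁.rep Q₂.rep (Pt2_rep_ne_zero Q₁)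
    (rep_nonprop hQne) ha1 ha2 haind hmQ hm'Q hmne hm'ne
  -- six points on the conic
  have hinter : 6 ≤ ((A.filter (fun P => c₁ P ≠ 0)) ∩ (A.filter (fun P => c₂ P ≠ 0))).card := by
    have hu := Finset.card_union_add_card_inter (A.filter (fun P => c₁ P ≠ 0))
      (A.filter (fun P => c₂ P ≠ 0))
    have hUA : ((A.filter (fun P => c₁ P ≠ 0)) ∪ (A.filter (fun P => c₂ P ≠ 0))).card ≤ A.card :=
      Finset.card_le_card (Finset.union_subset (Finset.filter_subset _ A) (Finset.filter_subset _ A))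
    omega
  obtain ⟨S₆, hS₆sub, hS₆card⟩ := Finset.exists_subset_card_eq (n := 6) hinter
  have hKpts : ∀ P ∈ S₆, dot a1 P.rep * dot m' P.rep - dot a2 P.rep * dot m P.rep = 0 := by
    intro P hP
    have hPS := hS₆sub hP
    have hP1 : c₁ P ≠ 0 := (Finset.mem_filter.mp (Finset.mem_of_mem_inter_left hPS)).2
    have hP2 : c₂ P ≠ 0 := (Finset.mem_filter.mp (Finset.mem_of_mem_inter_right hPS)).2
    have hPA : P ∈ A := (Finset.mem_filter.mp (Finset.mem_of_mem_inter_left hPS)).1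
    have e1 := hmw P hPA
    have e2 := hm'w P hPA
    have key : c₁ P * c₂ P * (dot a1 P.rep * dot m' P.rep - dot a2 P.rep * dot m P.rep) = 0 := by
      rw [dot_comm a1, dot_comm m', dot_comm a2, dot_comm m]
      linear_combination (c₂ P * dot P.rep m') * e1 - (c₂ P * dot P.rep m) * e2
    rcases mul_eq_zero.mp key with h | h
    · exact absurd h (mul_ne_zero hP1 hP2)
    · exact h
  obtain ⟨c₆, ⟨Pw, hPw, hPwne⟩, hFR₆⟩ := six_dep S₆ hS₆card a1 m' a2 m hKpts hKne
  have hS₆A : S₆ ⊆ A :=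
    hS₆sub.trans ((Finset.inter_subset_left).trans (Finset.filter_subset _ A))
  have h6min : S₆.card ≤ min 6 A.card := by
    rw [hS₆card]
    exact le_min_iff.mpr ⟨le_refl 6, by omega⟩
  exact hPwne (hI2 S₆ hS₆A h6min c₆ hFR₆ Pw hPw)


-- ============ full independence in degree n+4 ============

lemma IndA4 (n : ℕ) (A : Finset (Pt 2))
    (hI2 : ∀ S ⊆ A, S.card ≤ min 6 A.card → Ind 2 S)
    (hI3 : ∀ S ⊆ A, S.card ≤ min A.card (3 * n + 9) → Ind (n + 3) S)
    (hr : A.card ≤ 3 * n + 11) : Ind (n + 4) A := by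
  classical
  have hI4sub : ∀ S ⊆ A, S.card ≤ min A.card (3 * n + 9) + 1 → Ind (n + 4) S := Ind_step hI3
  rcases Nat.lt_or_ge A.card (3 * n + 11) with hcase | hcase
  · refine hI4sub A (Finset.Subset.refl A) ?_
    rcases le_or_gt A.card (3 * n + 9) with h | h
    · rw [min_eq_left h]; omega
    · rw [min_eq_right (by omega)]; omega
  · have hr11 : A.card = 3 * n + 11 := by omega
    have hmin : min A.card (3 * n + 9) = 3 * n + 9 := min_eq_right (by omega)
    intro c hFR P₀ hP₀
    by_contra hc0
    have hfull : ∀ P ∈ A, c P ≠ 0 := by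
      intro P₁ hP₁ hcP₁
      have hFR' : FR (n + 4) (A.erase P₁) c := by
        refine (FR_congr_support (Finset.erase_subset _ _) ?_).mpr hFR
        intro P hPA hPn
        have hPP : P = P₁ := by
          by_contra hne
          exact hPn (Finset.mem_erase.mpr ⟨hne, hPA⟩)
        rw [hPP]; exact hcP₁
      have hcard : (A.erase P₁).card ≤ min A.card (3 * n + 9) + 1 := by
        rw [Finset.card_erase_of_mem hP₁, hmin]; omega
      have hP₀e : P₀ ∈ A.erase P₁ :=
        Finset.mem_erase.mpr ⟨fun h => hc0 (h ▸ hcP₁), hP₀⟩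
      exact hc0 (hI4sub (A.erase P₁) (Finset.erase_subset _ _) hcard c hFR' P₀ hP₀e)
    obtain ⟨u1, u2, hu1, hu2, hind, _⟩ := perp_basis P₀.rep (Pt2_rep_ne_zero P₀)
    obtain ⟨P₁, hP₁A, hP₁ne⟩ : ∃ P₁ ∈ A, P₁ ≠ P₀ := by
      obtain ⟨P₁, h1, h2⟩ := Finset.exists_mem_ne (s := A) (by omega) P₀
      exact ⟨P₁, h1, h2⟩
    set s := c P₁ * dot P₁.rep u2 with hs
    set t := -(c P₁ * dot P₁.rep u1) with ht
    set u' := s • u1 + t • u2 with hu'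
    have hw' : FR (n + 3) A (fun P => c P * dot P.rep u') := contract_rel hFR u'
    have hval : ∀ P : Pt 2, c P * dot P.rep u'
        = s * (c P * dot P.rep u1) + t * (c P * dot P.rep u2) := by
      intro P; rw [hu', dot_comb_right]; ring
    have hP₀val : c P₀ * dot P₀.rep u' = 0 := by
      rw [hval]
      have e1 : dot P₀.rep u1 = 0 := by rw [dot_comm]; exact hu1
      have e2 : dot P₀.rep u2 = 0 := by rw [dot_comm]; exact hu2
      rw [e1, e2]; ring
    have hP₁val : c P₁ * dot P₁.rep u' = 0 := by
      rw [hval, hs, ht]; ring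
    have hP₁e : P₁ ∈ A.erase P₀ := Finset.mem_erase.mpr ⟨hP₁ne, hP₁A⟩
    have hFRrest : FR (n + 3) ((A.erase P₀).erase P₁) (fun P => c P * dot P.rep u') := by
      refine (FR_congr_support ((Finset.erase_subset _ _).trans (Finset.erase_subset _ _)) ?_).mpr hw'
      intro P hPA hPn
      by_cases h1 : P = P₀
      · rw [h1]; exact hP₀val
      · by_cases h2 : P = P₁
        · rw [h2]; exact hP₁val
        · exact absurd (Finset.mem_erase.mpr ⟨h2, Finset.mem_erase.mpr ⟨h1, hPA⟩⟩) hPn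
    have hcard2 : ((A.erase P₀).erase P₁).card ≤ min A.card (3 * n + 9) := by
      rw [Finset.card_erase_of_mem hP₁e, Finset.card_erase_of_mem hP₀, hmin]; omega
    have hzero := hI3 _ ((Finset.erase_subset _ _).trans (Finset.erase_subset _ _)) hcard2 _ hFRrest
    have hallzero : ∀ P ∈ A, c P * dot P.rep u' = 0 := by
      intro P hPA
      by_cases h1 : P = P₀
      · rw [h1]; exact hP₀val
      · by_cases h2 : P = P₁
        · rw [h2]; exact hP₁val
        · exact hzero P (Finset.mem_erase.mpr ⟨h2, Finset.mem_erase.mpr ⟨h1, hPA⟩⟩)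
    have hdotz : ∀ P ∈ A, dot P.rep u' = 0 := by
      intro P hPA
      rcases mul_eq_zero.mp (hallzero P hPA) with h | h
      · exact absurd h (hfull P hPA)
      · exact h
    by_cases hu'0 : u' = 0
    · rcases hind s t (hu' ▸ hu'0) with ⟨hs0, ht0⟩
      have h1 : dot P₁.rep u1 = 0 := by
        rw [ht] at ht0
        have h' := neg_eq_zero.mp ht0
        rcases mul_eq_zero.mp h' with h | h
        · exact absurd h (hfull P₁ hP₁A)
        · exact h
      have h2 : dot P₁.rep u2 = 0 := by
        rw [hs] at hs0
        rcases mul_eq_zero.mp hs0 with h | h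
        · exact absurd h (hfull P₁ hP₁A)
        · exact h
      obtain ⟨tt, htt⟩ := double_perp u1 u2 P₁.rep P₀.rep hind (Pt2_rep_ne_zero P₀)
        (by rw [dot_comm]; exact h1) (by rw [dot_comm]; exact h2) hu1 hu2
      exact hP₁ne (pt_eq_of_smul tt htt).symm
    · obtain ⟨S₄, hS₄sub, hS₄card⟩ := Finset.exists_subset_card_eq (s := A) (n := 4) (by omega)
      obtain ⟨c₄, ⟨Pw, hPw, hPwne⟩, hFR₄⟩ := four_dep S₄ hS₄card u' hu'0
        (fun P hP => hdotz P (hS₄sub hP))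
      have hminOK : S₄.card ≤ min 6 A.card := by
        rw [hS₄card]
        exact le_min_iff.mpr ⟨by omega, by omega⟩
      exact hPwne (hI2 S₄ hS₄sub hminOK c₄ hFR₄ Pw hPw)


end Stmt5Aux

open Stmt5Aux

/-- If `A` is a non-redundant decomposition of a ternary form `T` of degree
`8+2n` with `r = ℓ(A) ≤ 11+3n`, `k_2(A) = min {6, r}` and `k_{n+3}(A) ≥ min {r, 3n+9}`,
then `T` has rank `r` and is identifiable: `A` has minimal length among all decompositions
and is the unique decomposition of length at most `r`. -/
theorem stmt5 (n : ℕ) (T : MvPolynomial (Fin 3) ℂ) (hT0 : T ≠ 0)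
    (hThom : T.IsHomogeneous (8 + 2 * n))
    (A : Finset (Pt 2)) (hA : IsDecomp (8 + 2 * n) A T)
    (hAnr : NonRedundant (8 + 2 * n) A T)
    (hr : A.card ≤ 11 + 3 * n)
    (hk2 : kruskalRank 2 A = min 6 A.card)
    (hk3 : min A.card (3 * n + 9) ≤ kruskalRank (n + 3) A) :
    (∀ B : Finset (Pt 2), IsDecomp (8 + 2 * n) B T → A.card ≤ B.card) ∧
      (∀ B : Finset (Pt 2), IsDecomp (8 + 2 * n) B T → B.card ≤ A.card → B = A) := by
  classical
  obtain ⟨a, ha⟩ := hA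
  -- extracted independence hypotheses
  have hI2 : ∀ S ⊆ A, S.card ≤ min 6 A.card → Ind 2 S :=
    kruskal_le 2 (min 6 A.card) A (le_of_eq hk2.symm)
  have hI3 : ∀ S ⊆ A, S.card ≤ min A.card (3 * n + 9) → Ind (n + 3) S :=
    kruskal_le (n + 3) (min A.card (3 * n + 9)) A hk3
  have hIA4 : Ind (n + 4) A := IndA4 n A hI2 hI3 (by omega)
  -- nonzero coefficients
  have haz : ∀ P ∈ A, a P ≠ 0 := by
    intro P₀ hP₀ h0
    apply hAnr (A.erase P₀) (Finset.erase_ssubset hP₀)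
    rw [ha]
    have hsum : ∑ P ∈ A, a P • powRep (8 + 2 * n) P
        = ∑ P ∈ A.erase P₀, a P • powRep (8 + 2 * n) P := by
      rw [← Finset.add_sum_erase A _ hP₀, h0, zero_smul, zero_add]
    rw [hsum]
    exact Submodule.sum_mem _ (fun P hP => Submodule.smul_mem _ _
      (Submodule.subset_span (Set.mem_image_of_mem _ (Finset.mem_coe.mpr hP))))
  -- evaluation identity for any decomposition
  have hevalD : ∀ (C : Finset (Pt 2)) (cc : Pt 2 → ℂ),
      T = ∑ Q ∈ C, cc Q • powRep (8 + 2 * n) Q →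
      ∀ w : V3, eval w T = ∑ Q ∈ C, cc Q * dot Q.rep w ^ (8 + 2 * n) := by
    intro C cc hC w
    rw [hC]
    simp only [map_sum, smul_eq_C_mul, map_mul, eval_C]
    exact Finset.sum_congr rfl (fun Q _ => by rw [powRep_eval])
  have hscalar : ∀ (B : Finset (Pt 2)) (b : Pt 2 → ℂ),
      T = ∑ Q ∈ B, b Q • powRep (8 + 2 * n) Q →
      ∀ w : V3, ∑ P ∈ A, a P * dot P.rep w ^ ((n + 4) + (n + 4))
        = ∑ Q ∈ B, b Q * dot Q.rep w ^ ((n + 4) + (n + 4)) := by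
    intro B b hb w
    have hexp : (n + 4) + (n + 4) = 8 + 2 * n := by ring
    rw [hexp, ← hevalD A a ha w, ← hevalD B b hb w]
  have hpart1 : ∀ B : Finset (Pt 2), IsDecomp (8 + 2 * n) B T → A.card ≤ B.card := by
    rintro B ⟨b, hb⟩
    exact (span_core n A B a b hIA4 haz (hscalar B b hb)).1
  refine ⟨hpart1, ?_⟩
  rintro B ⟨b, hb⟩ hle
  have hBr : B.card = A.card := le_antisymm hle (hpart1 B ⟨b, hb⟩)
  by_contra hBA
  have hAB := hscalar B b hb
  have hsc := span_core n A B a b hIA4 haz hAB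
  -- span equality
  have hfin : ((powRep (n + 4)) '' (B : Set (Pt 2))).Finite := Set.Finite.image _ B.finite_toSet
  haveI := FiniteDimensional.span_of_finite ℂ hfin
  have hfrA : Module.finrank ℂ
      (Submodule.span ℂ (Set.range (fun P : ↥A => powRep (n + 4) P.1))) = A.card := by
    rw [finrank_span_eq_card (ind_to_li (n + 4) A hIA4), Fintype.card_coe]
  have hfrB : Module.finrank ℂ
      (Submodule.span ℂ ((powRep (n + 4)) '' (B : Set (Pt 2)))) ≤ B.card := by
    have hsets : (powRep (n + 4)) '' (B : Set (Pt 2))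
        = Set.range (fun P : ↥B => powRep (n + 4) P.1) := Set.image_eq_range _ _
    have hrangeB : Submodule.span ℂ ((powRep (n + 4)) '' (B : Set (Pt 2)))
        = LinearMap.range (Phi (n + 4) B) := by rw [hsets, ← range_Phi]
    rw [hrangeB]
    calc Module.finrank ℂ (LinearMap.range (Phi (n + 4) B))
        ≤ Module.finrank ℂ (↥B → ℂ) := LinearMap.finrank_range_le _
      _ = B.card := by rw [Module.finrank_pi, Fintype.card_coe]
  have hspaneq : Submodule.span ℂ (Set.range (fun P : ↥A => powRep (n + 4) P.1))
      = Submodule.span ℂ ((powRep (n + 4)) '' (B : Set (Pt 2))) := by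
    apply Submodule.eq_of_le_of_finrank_le hsc.2
    rw [hfrA]
    omega
  -- coefficients for each point of B
  have hrepQ : ∀ Q ∈ B, ∃ c : Pt 2 → ℂ,
      ∀ w : V3, dot Q.rep w ^ (n + 4) = ∑ P ∈ A, c P * dot P.rep w ^ (n + 4) := by
    intro Q hQ
    have hmem : powRep (n + 4) Q ∈ Submodule.span ℂ ((powRep (n + 4)) '' (B : Set (Pt 2))) :=
      Submodule.subset_span (Set.mem_image_of_mem _ (Finset.mem_coe.mpr hQ))
    rw [← hspaneq, ← range_Phi] at hmem
    obtain ⟨x, hx⟩ := hmem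
    refine ⟨fun P => if h : P ∈ A then x ⟨P, h⟩ else 0, fun w => ?_⟩
    have hev := congrArg (eval w) hx
    rw [powRep_eval] at hev
    rw [← hev, Phi_apply]
    simp only [map_sum, smul_eq_C_mul, map_mul, eval_C]
    symm
    calc ∑ P ∈ A, (if h : P ∈ A then x ⟨P, h⟩ else 0) * dot P.rep w ^ (n + 4)
        = ∑ i ∈ A.attach, (if h : (i : Pt 2) ∈ A then x ⟨i.1, h⟩ else 0)
            * dot (i : Pt 2).rep w ^ (n + 4) := (Finset.sum_attach A _).symm
      _ = ∑ i : ↥A, x i * eval w (powRep (n + 4) i.1) := by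
          rw [Finset.univ_eq_attach]
          refine Finset.sum_congr rfl (fun i _ => ?_)
          rw [dif_pos i.2, Subtype.coe_eta, powRep_eval]
  -- difference sets
  have hANB : (A \ B).card = (B \ A).card := by
    have h1 := Finset.card_inter_add_card_sdiff A B
    have h2 := Finset.card_inter_add_card_sdiff B A
    rw [Finset.inter_comm B A] at h2
    omega
  have hBAne : (B \ A).Nonempty := by
    rw [Finset.sdiff_nonempty]
    intro hsub
    exact hBA (Finset.eq_of_subset_of_card_le hsub (by omega))
  by_cases ht1 : (B \ A).card = 1
  · -- exactly one new point
    obtain ⟨Qs, hQs⟩ := Finset.card_eq_one.mp ht1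
    have hQsmem : Qs ∈ B \ A := hQs ▸ Finset.mem_singleton_self Qs
    have hQsB : Qs ∈ B := (Finset.mem_sdiff.mp hQsmem).1
    have hQsA : Qs ∉ A := (Finset.mem_sdiff.mp hQsmem).2
    have hAB1 : (A \ B).card = 1 := by omega
    obtain ⟨Ps, hPs⟩ := Finset.card_eq_one.mp hAB1
    have hPsmem : Ps ∈ A \ B := hPs ▸ Finset.mem_singleton_self Ps
    have hPsA : Ps ∈ A := (Finset.mem_sdiff.mp hPsmem).1
    have hPsB : Ps ∉ B := (Finset.mem_sdiff.mp hPsmem).2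
    have hBerase : B.erase Qs ⊆ A := by
      intro R hR
      rcases Finset.mem_erase.mp hR with ⟨hne, hRB⟩
      by_contra hRA
      have : R ∈ B \ A := Finset.mem_sdiff.mpr ⟨hRB, hRA⟩
      rw [hQs] at this
      exact hne (Finset.mem_singleton.mp this)
    obtain ⟨c, hc⟩ := hrepQ Qs hQsB
    have hmaster := contract A B a b (n + 4) (n + 4) hAB
    have hkey : ∀ u : V3, a Ps * dot Ps.rep u ^ (n + 4)
        = b Qs * dot Qs.rep u ^ (n + 4) * c Ps := by
      intro u
      set gu : Pt 2 → ℂ := fun P => a P * dot P.rep u ^ (n + 4)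
          - b Qs * dot Qs.rep u ^ (n + 4) * c P
          - (if P ∈ B.erase Qs then b P * dot P.rep u ^ (n + 4) else 0) with hgu
      have hFRgu : FR (n + 4) A gu := by
        intro w
        have hsplit : ∑ P ∈ A, gu P * dot P.rep w ^ (n + 4)
            = (∑ P ∈ A, a P * (dot P.rep u ^ (n + 4) * dot P.rep w ^ (n + 4)))
              - b Qs * dot Qs.rep u ^ (n + 4) * (∑ P ∈ A, c P * dot P.rep w ^ (n + 4))
              - (∑ P ∈ A, (if P ∈ B.erase Qs then b P * dot P.rep u ^ (n + 4) else 0)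
                  * dot P.rep w ^ (n + 4)) := by
          rw [Finset.mul_sum, ← Finset.sum_sub_distrib, ← Finset.sum_sub_distrib]
          exact Finset.sum_congr rfl (fun P _ => by rw [hgu]; ring)
        rw [hsplit]
        have hthird : ∑ P ∈ A, (if P ∈ B.erase Qs then b P * dot P.rep u ^ (n + 4) else 0)
            * dot P.rep w ^ (n + 4)
            = ∑ P ∈ B.erase Qs, b P * (dot P.rep u ^ (n + 4) * dot P.rep w ^ (n + 4)) := by
          have e1 : ∀ P ∈ A, (if P ∈ B.erase Qs then b P * dot P.rep u ^ (n + 4) else 0)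
              * dot P.rep w ^ (n + 4)
              = if P ∈ B.erase Qs then b P * (dot P.rep u ^ (n + 4) * dot P.rep w ^ (n + 4))
                else 0 := by
            intro P _
            by_cases h : P ∈ B.erase Qs
            · rw [if_pos h, if_pos h]; ring
            · rw [if_neg h, if_neg h, zero_mul]
          rw [Finset.sum_congr rfl e1, Finset.sum_ite_mem,
            Finset.inter_eq_right.mpr hBerase]
        rw [hthird, ← hc w]
        have hm := hmaster u w
        have hBsplit : ∑ Q ∈ B, b Q * (dot Q.rep u ^ (n + 4) * dot Q.rep w ^ (n + 4))
            = b Qs * (dot Qs.rep u ^ (n + 4) * dot Qs.rep w ^ (n + 4))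
              + ∑ Q ∈ B.erase Qs, b Q * (dot Q.rep u ^ (n + 4) * dot Q.rep w ^ (n + 4)) :=
          (Finset.add_sum_erase B _ hQsB).symm
        rw [hm, hBsplit]
        ring
      have hval := hIA4 gu hFRgu Ps hPsA
      rw [hgu] at hval
      simp only [if_neg (show Ps ∉ B.erase Qs from fun h => hPsB (Finset.mem_of_mem_erase h))]
        at hval
      linear_combination hval
    have hQsPs : Qs ≠ Ps := fun h => hQsA (h ▸ hPsA)
    obtain ⟨u, hu0, husep⟩ := exists_perp_sep Qs.rep (Pt2_rep_ne_zero Qs)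
      ({Ps} : Finset (Pt 2)) (fun P : Pt 2 => P.rep)
      (by
        intro P hP t
        rw [Finset.mem_singleton] at hP
        subst hP
        exact rep_nonprop hQsPs t)
    have hz : dot Qs.rep u = 0 := by rw [dot_comm]; exact hu0
    have hk := hkey u
    rw [hz, zero_pow (by omega : n + 4 ≠ 0), mul_zero, zero_mul] at hk
    have hd : dot Ps.rep u ≠ 0 := by
      rw [dot_comm]; exact husep Ps (Finset.mem_singleton_self Ps)
    rcases mul_eq_zero.mp hk with h | h
    · exact haz Ps hPsA h
    · exact pow_ne_zero (n + 4) hd h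
  · -- at least two new points
    have ht2 : 1 < (B \ A).card := by
      have := Finset.card_pos.mpr hBAne
      omega
    obtain ⟨Q₁, hQ₁, Q₂, hQ₂, hQ12⟩ := Finset.one_lt_card.mp ht2
    have hQ₁B : Q₁ ∈ B := (Finset.mem_sdiff.mp hQ₁).1
    have hQ₁A : Q₁ ∉ A := (Finset.mem_sdiff.mp hQ₁).2
    have hQ₂B : Q₂ ∈ B := (Finset.mem_sdiff.mp hQ₂).1
    have hQ₂A : Q₂ ∉ A := (Finset.mem_sdiff.mp hQ₂).2
    obtain ⟨c₁, hc₁⟩ := hrepQ Q₁ hQ₁B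
    obtain ⟨c₂, hc₂⟩ := hrepQ Q₂ hQ₂B
    obtain ⟨hstar₁, hsupp₁, hr11⟩ := Qstruct n A hI2 hI3 (by omega) Q₁ hQ₁A c₁ hc₁
    obtain ⟨hstar₂, hsupp₂, _⟩ := Qstruct n A hI2 hI3 (by omega) Q₂ hQ₂A c₂ hc₂
    exact finale n A hI2 hI3 hr11 Q₁ Q₂ hQ12 hQ₁A hQ₂A c₁ c₂ hc₁ hc₂
      hstar₁ hstar₂ hsupp₁ hsupp₂

end
end

section
/- Let T be a form of degree d in m+1 variables with a non-redundant decomposition A ⊂ ℙ^m. If ℓ(A) ≤ (d+1)/2, then A is the unique decomposition of T of minimal length; in particular T has rank ℓ(A) and is identifiable. -/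
open MvPolynomial
open scoped Classical

noncomputable section

/-- dot product -/
def dotc {m : ℕ} (v x : Fin (m + 1) → ℂ) : ℂ := ∑ j, v j * x j

lemma eval_linForm {m : ℕ} (v x : Fin (m + 1) → ℂ) :
    eval x (linForm v) = dotc v x := by
  simp [linForm, dotc]

lemma linForm_ne_zero {m : ℕ} {v : Fin (m + 1) → ℂ} (hv : v ≠ 0) : linForm v ≠ 0 := by
  obtain ⟨j, hj⟩ := Function.ne_iff.mp hv
  intro h
  apply hj
  have := congrArg (eval (Pi.single j 1)) h
  rw [eval_linForm, map_zero] at this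
  simpa [dotc, Pi.single_apply, mul_ite, Finset.sum_ite_eq'] using this

lemma avoid {m : ℕ} {ι : Type*} (s : Finset ι) (n : ι → (Fin (m + 1) → ℂ))
    (h : ∀ k ∈ s, n k ≠ 0) :
    ∃ x : Fin (m + 1) → ℂ, ∀ k ∈ s, dotc (n k) x ≠ 0 := by
  set F : MvPolynomial (Fin (m + 1)) ℂ := ∏ k ∈ s, linForm (n k) with hF
  have hF0 : F ≠ 0 := Finset.prod_ne_zero_iff.mpr fun k hk => linForm_ne_zero (h k hk)
  have : ¬ ∀ x, eval x F = 0 := by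
    intro hx
    exact hF0 (MvPolynomial.funext (q := 0) (by simpa using hx))
  push_neg at this
  obtain ⟨x, hx⟩ := this
  refine ⟨x, fun k hk => ?_⟩
  rw [hF, map_prod] at hx
  have := Finset.prod_ne_zero_iff.mp hx k hk
  rwa [eval_linForm] at this

lemma dotc_add_smul {m : ℕ} (v u w : Fin (m + 1) → ℂ) (t : ℂ) :
    dotc v (u + t • w) = dotc v u + t * dotc v w := by
  simp [dotc, mul_add, Finset.sum_add_distrib, Finset.mul_sum]
  ring_nf
  rw [Finset.sum_congr rfl]
  intros; ring

lemma indep_core {m d : ℕ} (Z : Finset (Pt m)) (hcard : Z.card ≤ d + 1)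
    (c : Pt m → ℂ) (hsum : ∑ P ∈ Z, c P • powRep d P = 0) :
    ∀ P ∈ Z, c P = 0 := by
  -- step 1: choose w with dotc P.rep w ≠ 0
  obtain ⟨w, hw⟩ := avoid Z (fun P => P.rep) (fun P _ => P.rep_nonzero)
  -- step 2: choose u separating the points
  have hsep : ∀ pq ∈ Z.offDiag,
      (fun pq : Pt m × Pt m => dotc pq.2.rep w • pq.1.rep - dotc pq.1.rep w • pq.2.rep) pq ≠ 0 := by
    rintro ⟨P, Q⟩ hpq
    rw [Finset.mem_offDiag] at hpq
    obtain ⟨hP, hQ, hne⟩ := hpq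
    intro h0
    rw [sub_eq_zero] at h0
    have hQw : dotc Q.rep w ≠ 0 := hw Q hQ
    have : P.rep = (dotc P.rep w / dotc Q.rep w) • Q.rep := by
      rw [div_eq_mul_inv, mul_comm, mul_smul, ← h0, ← mul_smul, inv_mul_cancel₀ hQw, one_smul]
    apply hne
    calc P = Projectivization.mk ℂ P.rep P.rep_nonzero := (Projectivization.mk_rep P).symm
      _ = Projectivization.mk ℂ Q.rep Q.rep_nonzero := by
          rw [Projectivization.mk_eq_mk_iff']
          exact ⟨_, this.symm⟩
      _ = Q := Projectivization.mk_rep Q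
  obtain ⟨u, hu⟩ := avoid Z.offDiag
      (fun pq => dotc pq.2.rep w • pq.1.rep - dotc pq.1.rep w • pq.2.rep) hsep
  -- the separated scalars
  set cp : Pt m → ℂ := fun P => dotc P.rep u / dotc P.rep w with hcp
  have dotc_expand : ∀ (a b : ℂ) (x y z : Fin (m + 1) → ℂ),
      dotc (a • x - b • y) z = a * dotc x z - b * dotc y z := by
    intro a b x y z
    simp only [dotc, Pi.sub_apply, Pi.smul_apply, smul_eq_mul, sub_mul, mul_assoc,
      Finset.sum_sub_distrib, Finset.mul_sum]
  have hcp_inj : ∀ P ∈ Z, ∀ Q ∈ Z, cp P = cp Q → P = Q := by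
    intro P hP Q hQ hEq
    by_contra hne
    have hmem : (P, Q) ∈ Z.offDiag := Finset.mem_offDiag.mpr ⟨hP, hQ, hne⟩
    have h := hu _ hmem
    apply h
    have h1 : dotc P.rep u * dotc Q.rep w = dotc Q.rep u * dotc P.rep w :=
      (div_eq_div_iff (hw P hP) (hw Q hQ)).mp hEq
    show dotc (dotc Q.rep w • P.rep - dotc P.rep w • Q.rep) u = 0
    rw [dotc_expand]
    linear_combination h1
  -- step 4: the univariate polynomial obtained by restricting to the line u + t w
  set q : Polynomial ℂ :=
    ∑ P ∈ Z, Polynomial.C (c P * dotc P.rep w ^ d) * (Polynomial.X + Polynomial.C (cp P)) ^ d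
    with hq
  have hq0 : q = 0 := by
    apply Polynomial.funext
    intro t
    have hev := congrArg (eval (u + t • w)) hsum
    rw [map_sum, map_zero] at hev
    rw [hq]
    simp only [Polynomial.eval_finset_sum, Polynomial.eval_mul, Polynomial.eval_pow,
      Polynomial.eval_add, Polynomial.eval_C, Polynomial.eval_X, Polynomial.eval_zero]
    rw [← hev]
    apply Finset.sum_congr rfl
    intro P hP
    rw [smul_eq_C_mul, map_mul, eval_C, powRep, map_pow, eval_linForm, dotc_add_smul]
    have hdw := hw P hP
    have key : dotc P.rep w ^ d * (t + cp P) ^ d = (dotc P.rep u + t * dotc P.rep w) ^ d := by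
      rw [← mul_pow]
      congr 1
      rw [hcp]
      field_simp
      ring
    rw [mul_assoc, key]
  -- step 5: indexing by Fin r and Vandermonde
  intro P hP
  set r := Z.card with hr
  set e := Z.equivFin with he
  set f : Fin r → ℂ := fun i => cp ((e.symm i) : Pt m) with hf
  set δ : Fin r → ℂ := fun i => c ((e.symm i) : Pt m) * dotc ((e.symm i) : Pt m).rep w ^ d with hδ
  have hfinj : Function.Injective f := by
    intro i i' hii
    have h2 : (e.symm i : Pt m) = (e.symm i' : Pt m) :=
      hcp_inj _ (e.symm i).2 _ (e.symm i').2 hii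
    exact e.symm.injective (Subtype.ext h2)
  have hsums : ∀ j : Fin r, ∑ i, δ i * f i ^ (j : ℕ) = 0 := by
    intro j
    have hjr : (j : ℕ) < r := j.isLt
    have hjd : (j : ℕ) ≤ d := by omega
    have hcoeff := congrArg (fun p => Polynomial.coeff p (d - j)) hq0
    simp only [hq, Polynomial.finset_sum_coeff, Polynomial.coeff_C_mul,
      Polynomial.coeff_X_add_C_pow, Polynomial.coeff_zero] at hcoeff
    have hdd : d - (d - (j : ℕ)) = j := by omega
    rw [hdd] at hcoeff
    have hch : ((d.choose (d - (j : ℕ)) : ℂ)) ≠ 0 := by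
      exact_mod_cast Nat.cast_ne_zero.mpr (Nat.choose_pos (by omega)).ne'
    have hz : ∑ P ∈ Z, c P * dotc P.rep w ^ d * cp P ^ (j : ℕ) = 0 := by
      have h4 : (∑ P ∈ Z, c P * dotc P.rep w ^ d * cp P ^ (j : ℕ))
          * ((d.choose (d - (j : ℕ)) : ℂ)) = 0 := by
        rw [Finset.sum_mul, ← hcoeff]
        exact Finset.sum_congr rfl fun Q _ => by ring
      rcases mul_eq_zero.mp h4 with h | h
      · exact h
      · exact absurd h hch
    calc ∑ i, δ i * f i ^ (j : ℕ)
        = ∑ Q : Z, c (Q : Pt m) * dotc (Q : Pt m).rep w ^ d * cp (Q : Pt m) ^ (j : ℕ) := by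
          rw [← Equiv.sum_comp e.symm (fun Q : Z =>
            c (Q : Pt m) * dotc (Q : Pt m).rep w ^ d * cp (Q : Pt m) ^ (j : ℕ))]
      _ = ∑ Q ∈ Z, c Q * dotc Q.rep w ^ d * cp Q ^ (j : ℕ) :=
          Finset.sum_coe_sort Z (fun Q => c Q * dotc Q.rep w ^ d * cp Q ^ (j : ℕ))
      _ = 0 := hz
  have hδ0 : δ = 0 := by
    apply Matrix.eq_zero_of_vecMul_eq_zero
      (Matrix.det_vandermonde_ne_zero_iff.mpr hfinj)
    funext j
    simp only [Matrix.vecMul, dotProduct, Matrix.vandermonde_apply, Pi.zero_apply]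
    exact hsums j
  have hPδ : c P * dotc P.rep w ^ d = 0 := by
    have h3 := congrFun hδ0 (e ⟨P, hP⟩)
    simp only [hδ, Equiv.symm_apply_apply, Pi.zero_apply] at h3
    exact h3
  rcases mul_eq_zero.mp hPδ with h | h
  · exact h
  · exact absurd h (pow_ne_zero d (hw P hP))

lemma key_subset {m d : ℕ} (T : MvPolynomial (Fin (m + 1)) ℂ)
    (A B : Finset (Pt m)) (hA : IsDecomp d A T) (hAnr : NonRedundant d A T)
    (hB : IsDecomp d B T) (hcard : A.card + B.card ≤ d + 1) : A ⊆ B := by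
  obtain ⟨a, ha⟩ := hA
  obtain ⟨b, hb⟩ := hB
  set c : Pt m → ℂ := fun P => (if P ∈ A then a P else 0) - (if P ∈ B then b P else 0) with hc
  have h1 : ∑ P ∈ A ∪ B, (if P ∈ A then a P else 0) • powRep d P = T := by
    rw [← Finset.sum_subset Finset.subset_union_left
      (fun x _ hx => by rw [if_neg hx, zero_smul]), ha]
    exact Finset.sum_congr rfl fun P hP => by rw [if_pos hP]
  have h2 : ∑ P ∈ A ∪ B, (if P ∈ B then b P else 0) • powRep d P = T := by
    rw [← Finset.sum_subset Finset.subset_union_right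
      (fun x _ hx => by rw [if_neg hx, zero_smul]), hb]
    exact Finset.sum_congr rfl fun P hP => by rw [if_pos hP]
  have hsum : ∑ P ∈ A ∪ B, c P • powRep d P = 0 := by
    simp only [hc, sub_smul, Finset.sum_sub_distrib, h1, h2, sub_self]
  have hall := indep_core (A ∪ B) (le_trans (Finset.card_union_le A B) hcard) c hsum
  intro P hPA
  by_contra hPB
  have haP : a P = 0 := by
    have := hall P (Finset.mem_union_left _ hPA)
    simpa [hc, hPA, hPB] using this
  apply hAnr (A.erase P) (Finset.erase_ssubset hPA)
  rw [ha, ← Finset.add_sum_erase A _ hPA, haP, zero_smul, zero_add]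
  apply Submodule.sum_mem
  intro Q hQ
  exact Submodule.smul_mem _ _ (Submodule.subset_span ⟨Q, Finset.mem_coe.mpr hQ, rfl⟩)

/-- If `A` is a non-redundant decomposition of a form `T` of degree `d` with
`ℓ(A) ≤ (d+1)/2` (i.e. `2 ℓ(A) ≤ d+1`), then `A` is the unique decomposition of minimal
length: `T` has rank `ℓ(A)` and is identifiable. -/
theorem stmt8 (m d : ℕ) (T : MvPolynomial (Fin (m + 1)) ℂ) (hT0 : T ≠ 0)
    (hThom : T.IsHomogeneous d)
    (A : Finset (Pt m)) (hA : IsDecomp d A T) (hAnr : NonRedundant d A T)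
    (hlen : 2 * A.card ≤ d + 1) :
    (∀ B : Finset (Pt m), IsDecomp d B T → A.card ≤ B.card) ∧
      (∀ B : Finset (Pt m), IsDecomp d B T → B.card ≤ A.card → B = A) := by
  constructor
  · intro B hB
    by_contra hlt
    push_neg at hlt
    have hsub : A ⊆ B := key_subset T A B hA hAnr hB (by omega)
    have := Finset.card_le_card hsub
    omega
  · intro B hB hBA
    have hsub : A ⊆ B := key_subset T A B hA hAnr hB (by omega)
    exact (Finset.eq_of_subset_of_card_le hsub hBA).symm


end
end

section
/- Let T be a form of degree d in m+1 variables and let A, B be two non-redundant decompositions of T with A ∩ B = ∅. Then Z = A ∪ B satisfies the Cayley–Bacharach property CB(d). -/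
open MvPolynomial
open scoped Classical

noncomputable section

section Stmt9Aux

lemma prod_X_pow_fn {m : ℕ} (k : Fin (m + 1) → ℕ) :
    (∏ i, (X i : MvPolynomial (Fin (m + 1)) ℂ) ^ k i)
      = monomial (Finsupp.equivFunOnFinite.symm k) 1 := by
  rw [← prod_X_pow_eq_monomial]
  refine (Finset.prod_subset (Finset.subset_univ _) ?_).symm
  intro i _ hi
  rw [Finsupp.notMem_support_iff] at hi
  change k i = 0 at hi
  simp [hi]

lemma coeff_linForm_pow {m : ℕ} (v : Fin (m + 1) → ℂ) (d : ℕ) (α : Fin (m + 1) →₀ ℕ)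
    (hα : ∑ i, α i = d) :
    coeff α (linForm v ^ d)
      = (Nat.multinomial Finset.univ ⇑α : ℂ) * ∏ i, v i ^ α i := by
  rw [linForm, Finset.sum_pow_eq_sum_piAntidiag, coeff_sum]
  have hterm : ∀ k : Fin (m + 1) → ℕ,
      (Nat.multinomial Finset.univ k : MvPolynomial (Fin (m + 1)) ℂ) *
        ∏ i, (C (v i) * X i) ^ k i
      = monomial (Finsupp.equivFunOnFinite.symm k)
          ((Nat.multinomial Finset.univ k : ℂ) * ∏ i, v i ^ k i) := by
    intro k
    have : ∏ i, (C (v i) * X i) ^ k i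
        = C (∏ i, v i ^ k i) * ∏ i, (X i : MvPolynomial (Fin (m + 1)) ℂ) ^ k i := by
      rw [map_prod]
      rw [← Finset.prod_mul_distrib]
      exact Finset.prod_congr rfl fun i _ => by rw [mul_pow, map_pow]
    rw [this, prod_X_pow_fn, ← C_eq_coe_nat, ← mul_assoc, ← map_mul, C_mul_monomial, mul_one]
  rw [Finset.sum_congr rfl fun k _ => by rw [hterm k]]
  rw [Finset.sum_eq_single_of_mem (⇑α)]
  · rw [Finsupp.equivFunOnFinite_symm_coe, coeff_monomial, if_pos rfl]
  · rw [Finset.mem_piAntidiag]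
    exact ⟨hα, fun i _ => Finset.mem_univ i⟩
  · intro k _ hk
    rw [coeff_monomial, if_neg]
    intro h
    apply hk
    have := congrArg (Finsupp.equivFunOnFinite) h
    exact (by simpa using this : k = Finsupp.equivFunOnFinite α)

/-- The apolarity pairing against `F`. -/
def pairF {m : ℕ} (F : MvPolynomial (Fin (m + 1)) ℂ) :
    MvPolynomial (Fin (m + 1)) ℂ →ₗ[ℂ] ℂ :=
  ∑ α ∈ F.support, (coeff α F * ∏ i, (Nat.factorial (α i) : ℂ)) • lcoeff ℂ α

lemma pairF_pow {m d : ℕ} (F : MvPolynomial (Fin (m + 1)) ℂ) (hF : F.IsHomogeneous d)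
    (v : Fin (m + 1) → ℂ) :
    pairF F (linForm v ^ d) = (Nat.factorial d : ℂ) * eval v F := by
  rw [eval_eq', Finset.mul_sum, pairF, LinearMap.sum_apply]
  refine Finset.sum_congr rfl fun α hα => ?_
  have hdeg : ∑ i, α i = d := by
    have h1 : Finsupp.weight (1 : Fin (m + 1) → ℕ) α = d := hF (mem_support_iff.mp hα)
    have h2 : Finsupp.degree α = ∑ i, α i := by
      refine Finset.sum_subset (Finset.subset_univ _) ?_
      intro i _ hi
      exact Finsupp.notMem_support_iff.mp hi
    rw [← h2, Finsupp.degree_eq_weight_one]; exact h1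
  rw [LinearMap.smul_apply, lcoeff_apply, coeff_linForm_pow v d α hdeg]
  have hfac : (∏ i, (Nat.factorial (α i) : ℂ)) * (Nat.multinomial Finset.univ ⇑α : ℂ)
      = (Nat.factorial d : ℂ) := by
    rw [← Nat.cast_prod, ← Nat.cast_mul, Nat.multinomial_spec, hdeg]
  calc (coeff α F * ∏ i, (Nat.factorial (α i) : ℂ)) •
        ((Nat.multinomial Finset.univ ⇑α : ℂ) * ∏ i, v i ^ α i)
      = coeff α F * ((∏ i, (Nat.factorial (α i) : ℂ)) * (Nat.multinomial Finset.univ ⇑α : ℂ))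
          * ∏ i, v i ^ α i := by
        rw [smul_eq_mul]; ring
    _ = (Nat.factorial d : ℂ) * (coeff α F * ∏ i, v i ^ α i) := by rw [hfac]; ring

lemma stmt9_key {m d : ℕ} {T : MvPolynomial (Fin (m + 1)) ℂ} {A B : Finset (Pt m)}
    (hA : IsDecomp d A T) (hAnr : NonRedundant d A T) (hB : IsDecomp d B T)
    {P : Pt m} (hP : P ∈ A) (hPB : P ∉ B)
    {F : MvPolynomial (Fin (m + 1)) ℂ} (hF : F.IsHomogeneous d)
    (hvan : ∀ Q ∈ (A ∪ B).erase P, eval Q.rep F = 0) : eval P.rep F = 0 := by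
  obtain ⟨a, ha⟩ := hA
  obtain ⟨b, hb⟩ := hB
  by_contra hne
  have hppow : ∀ Q : Pt m, pairF F (powRep d Q) = (Nat.factorial d : ℂ) * eval Q.rep F :=
    fun Q => pairF_pow F hF Q.rep
  have h2 : pairF F T = 0 := by
    rw [hb, map_sum]
    refine Finset.sum_eq_zero fun Q hQ => ?_
    have hQP : Q ≠ P := fun h => hPB (h ▸ hQ)
    rw [map_smul, hppow,
      hvan Q (Finset.mem_erase.mpr ⟨hQP, Finset.mem_union_right _ hQ⟩)]
    simp
  have h1 : a P * ((Nat.factorial d : ℂ) * eval P.rep F) = 0 := by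
    rw [← h2, ha, map_sum, Finset.sum_eq_single_of_mem P hP]
    · rw [map_smul, hppow]; simp [smul_eq_mul]
    · intro Q hQ hQP
      rw [map_smul, hppow,
        hvan Q (Finset.mem_erase.mpr ⟨hQP, Finset.mem_union_left _ hQ⟩)]
      simp
  have haP : a P = 0 := by
    rcases mul_eq_zero.mp h1 with h | h
    · exact h
    · rcases mul_eq_zero.mp h with h' | h'
      · exact absurd h' (Nat.cast_ne_zero.mpr (Nat.factorial_ne_zero d))
      · exact absurd h' hne
  refine hAnr (A.erase P) (Finset.erase_ssubset hP) ?_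
  have hT : T = ∑ Q ∈ A.erase P, a Q • powRep d Q := by
    rw [ha, ← Finset.add_sum_erase _ _ hP, haP, zero_smul, zero_add]
  rw [hT]
  exact Submodule.sum_mem _ fun Q hQ =>
    Submodule.smul_mem _ _ (Submodule.subset_span
      ⟨Q, by simpa using And.intro (Finset.mem_erase.mp hQ).2 (Finset.mem_erase.mp hQ).1, rfl⟩)

end Stmt9Aux

/-- If `A`, `B` are disjoint non-redundant decompositions of a form `T` of
degree `d`, then `Z = A ∪ B` satisfies the Cayley–Bacharach property `CB(d)`. -/
theorem stmt9 (m d : ℕ) (T : MvPolynomial (Fin (m + 1)) ℂ) (hT0 : T ≠ 0)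
    (hThom : T.IsHomogeneous d)
    (A B : Finset (Pt m))
    (hA : IsDecomp d A T) (hAnr : NonRedundant d A T)
    (hB : IsDecomp d B T) (hBnr : NonRedundant d B T)
    (hAB : A ∩ B = ∅) :
    CB d (A ∪ B) := by
  intro P hP F hF hvan
  have hdisj : ∀ {Q : Pt m}, Q ∈ A → Q ∈ B → False := fun hQA hQB => by
    have : _ ∈ A ∩ B := Finset.mem_inter.mpr ⟨hQA, hQB⟩
    simp [hAB] at this
  rcases Finset.mem_union.mp hP with h | h
  · exact stmt9_key hA hAnr hB h (fun hPB => hdisj h hPB) hF hvan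
  · refine stmt9_key hB hBnr hA h (fun hPA => hdisj hPA h) hF ?_
    rwa [Finset.union_comm]

end
end

section
/- Let A ⊂ ℙ^2 be a finite set contained in a smooth plane cubic curve C (the zero locus of a homogeneous polynomial F of degree 3 whose gradient does not vanish at any point of C). Then for every integer b ≥ 1, the b-th Kruskal rank of A satisfies k_b(A) ≤ 3b. -/
open MvPolynomial
open scoped Classical

noncomputable section

namespace Stmt15Aux

/-- Finsupps of degree `d` correspond to multisets of size `d`. -/
def degEquivSym (m d : ℕ) : {x : Fin m →₀ ℕ | x.degree = d} ≃ Sym (Fin m) d where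
  toFun f := ⟨Finsupp.toMultiset f.1, by
    rw [Finsupp.card_toMultiset]
    exact f.2⟩
  invFun s := ⟨Multiset.toFinsupp s.1, by
    show (Multiset.toFinsupp s.1).degree = d
    have h : (Multiset.toFinsupp s.1).sum (fun _ => id) = Multiset.card s.1 :=
      Multiset.toFinsupp_sum_eq s.1
    rw [show (Multiset.toFinsupp s.1).degree = (Multiset.toFinsupp s.1).sum (fun _ => id) from rfl,
      h, s.2]⟩
  left_inv f := Subtype.ext (by simp)
  right_inv s := Subtype.ext (by simp)

/-- A basis of the homogeneous submodule indexed by `Sym (Fin m) d`. -/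
def homBasis (m d : ℕ) :
    Module.Basis (Sym (Fin m) d) ℂ (homogeneousSubmodule (Fin m) ℂ d) :=
  ((MvPolynomial.basisRestrictSupport ℂ {x : Fin m →₀ ℕ | x.degree = d}).map
    (LinearEquiv.ofEq _ _ (homogeneousSubmodule_eq_finsupp_supported (Fin m) ℂ d).symm)).reindex
    (degEquivSym m d)

instance homFinite (m d : ℕ) : Module.Finite ℂ (homogeneousSubmodule (Fin m) ℂ d) :=
  Module.Finite.of_basis (homBasis m d)

lemma finrank_hom (m d : ℕ) :
    Module.finrank ℂ (homogeneousSubmodule (Fin m) ℂ d) = Nat.multichoose m d := by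
  rw [Module.finrank_eq_card_basis (homBasis m d), Sym.card_sym_eq_multichoose,
    Fintype.card_fin]

lemma finrank_hom3 (d : ℕ) :
    Module.finrank ℂ (homogeneousSubmodule (Fin 3) ℂ d) = (d + 2).choose 2 := by
  rw [finrank_hom, Nat.multichoose_eq]
  have : 3 + d - 1 = d + 2 := by omega
  rw [this]
  have h2 := Nat.choose_symm (show 2 ≤ d + 2 by omega)
  rw [show d + 2 - 2 = d from by omega] at h2
  exact h2

lemma choose_step (n : ℕ) : (n + 1).choose 2 = n.choose 2 + n := by
  have := Nat.choose_succ_succ n 1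
  simpa [add_comm] using this

lemma choose25 (k : ℕ) : (k + 5).choose 2 = (k + 2).choose 2 + 3 * (k + 3) := by
  have a := choose_step (k + 2)
  have b := choose_step (k + 3)
  have c := choose_step (k + 4)
  rw [show k + 2 + 1 = k + 3 from by omega] at a
  rw [show k + 3 + 1 = k + 4 from by omega] at b
  rw [show k + 4 + 1 = k + 5 from by omega] at c
  omega

lemma linForm_isHom {m : ℕ} (v : Fin (m + 1) → ℂ) : (linForm v).IsHomogeneous 1 := by
  rw [← mem_homogeneousSubmodule]
  apply Submodule.sum_mem
  intro i _
  rw [← smul_eq_C_mul]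
  exact Submodule.smul_mem _ _ ((mem_homogeneousSubmodule _ _).2 (isHomogeneous_X ℂ i))

lemma eval_linForm {m : ℕ} (u v : Fin (m + 1) → ℂ) :
    eval u (linForm v) = ∑ i, v i * u i := by
  simp [linForm]

lemma eval_linForm_comm {m : ℕ} (u v : Fin (m + 1) → ℂ) :
    eval u (linForm v) = eval v (linForm u) := by
  simp [eval_linForm, mul_comm]

/-- Evaluation at `v` as a linear functional on the degree-`b` homogeneous submodule. -/
def evalD (b : ℕ) (v : Fin 3 → ℂ) :
    Module.Dual ℂ (homogeneousSubmodule (Fin 3) ℂ b) where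
  toFun G := eval v G.1
  map_add' G H := by simp
  map_smul' c G := by simp [smul_eq_C_mul]

/-- Multiplication by a fixed homogeneous cubic `F`, as a linear map between
homogeneous components. -/
def mulF (F : MvPolynomial (Fin 3) ℂ) (hFhom : F.IsHomogeneous 3) (k : ℕ) :
    homogeneousSubmodule (Fin 3) ℂ k →ₗ[ℂ] homogeneousSubmodule (Fin 3) ℂ (k + 3) where
  toFun G := ⟨F * G.1, by
    have := hFhom.mul G.2
    rwa [add_comm] at this⟩
  map_add' G H := Subtype.ext (by simp [mul_add])
  map_smul' c G := Subtype.ext (by simp [mul_smul_comm])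

lemma mulF_inj (F : MvPolynomial (Fin 3) ℂ) (hF0 : F ≠ 0) (hFhom : F.IsHomogeneous 3) (k : ℕ) :
    Function.Injective (mulF F hFhom k) := by
  intro G H h
  have h' : F * G.1 = F * H.1 := congrArg Subtype.val h
  exact Subtype.ext (mul_left_cancel₀ hF0 h')

lemma exists_small_dual (b : ℕ) (hb : 1 ≤ b) (F : MvPolynomial (Fin 3) ℂ) (hF0 : F ≠ 0)
    (hFhom : F.IsHomogeneous 3) (S : Finset (Pt 2))
    (hSC : ∀ P ∈ S, eval (Projectivization.rep P) F = 0) :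
    ∃ W : Submodule ℂ (Module.Dual ℂ (homogeneousSubmodule (Fin 3) ℂ b)),
      (∀ P ∈ S, evalD b (Projectivization.rep P) ∈ W) ∧ Module.finrank ℂ W ≤ 3 * b := by
  by_cases hb3 : 3 ≤ b
  · obtain ⟨k, rfl⟩ : ∃ k, b = k + 3 := ⟨b - 3, by omega⟩
    set U := LinearMap.range (mulF F hFhom k) with hU
    refine ⟨U.dualAnnihilator, ?_, ?_⟩
    · intro P hP
      rw [Submodule.mem_dualAnnihilator]
      rintro u ⟨G, rfl⟩
      show eval (Projectivization.rep P) ((mulF F hFhom k G : homogeneousSubmodule (Fin 3) ℂ (k + 3)) : MvPolynomial (Fin 3) ℂ) = 0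
      show eval (Projectivization.rep P) (F * G.1) = 0
      rw [map_mul, hSC P hP, zero_mul]
    · have e := Subspace.quotEquivAnnihilator U
      have e1 : Module.finrank ℂ (homogeneousSubmodule (Fin 3) ℂ (k + 3) ⧸ U)
          = Module.finrank ℂ U.dualAnnihilator := e.finrank_eq
      have q := Submodule.finrank_quotient_add_finrank U
      have h2 : Module.finrank ℂ U = (k + 2).choose 2 := by
        rw [hU, LinearMap.finrank_range_of_inj (mulF_inj F hF0 hFhom k), finrank_hom3]
      have h3 : Module.finrank ℂ (homogeneousSubmodule (Fin 3) ℂ (k + 3)) = (k + 5).choose 2 := by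
        rw [finrank_hom3, show k + 3 + 2 = k + 5 from by omega]
      have arith := choose25 k
      omega
  · refine ⟨⊤, fun P _ => Submodule.mem_top, ?_⟩
    rw [finrank_top, Subspace.dual_finrank_eq, finrank_hom3]
    interval_cases b <;> decide

lemma key_dep (b : ℕ) (hb : 1 ≤ b) (F : MvPolynomial (Fin 3) ℂ) (hF0 : F ≠ 0)
    (hFhom : F.IsHomogeneous 3) (S : Finset (Pt 2))
    (hSC : ∀ P ∈ S, eval (Projectivization.rep P) F = 0)
    (hcard : S.card = 3 * b + 1) :
    ¬ LinearIndependent ℂ (fun P : S => powRep b P.1) := by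
  intro hli
  obtain ⟨W, hWmem, hWrank⟩ := exists_small_dual b hb F hF0 hFhom S hSC
  have hnli : ¬ LinearIndependent ℂ
      (fun P : S => (⟨evalD b (Projectivization.rep P.1), hWmem P.1 P.2⟩ : W)) := by
    intro h
    have := h.fintype_card_le_finrank
    rw [Fintype.card_coe, hcard] at this
    omega
  obtain ⟨g, hgsum, Q, hgQ⟩ := Fintype.not_linearIndependent_iff.mp hnli
  have h2 : (∑ P : S, g P • evalD b (Projectivization.rep P.1)) = 0 := by
    have := congrArg (Submodule.subtype W) hgsum
    simpa [map_sum] using this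
  have hrel : ∀ G : MvPolynomial (Fin 3) ℂ, G.IsHomogeneous b →
      ∑ P : S, g P * eval (Projectivization.rep P.1) G = 0 := by
    intro G hG
    have h3 := LinearMap.congr_fun h2 ⟨G, (mem_homogeneousSubmodule _ _).2 hG⟩
    simpa [evalD] using h3
  have hzero : ∑ P : S, g P • powRep b P.1 = 0 := by
    apply MvPolynomial.funext
    intro w
    rw [map_zero]
    calc eval w (∑ P : S, g P • powRep b P.1)
        = ∑ P : S, g P * (eval w (linForm (Projectivization.rep P.1))) ^ b := by
          simp [powRep, smul_eq_C_mul]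
      _ = ∑ P : S, g P * eval (Projectivization.rep P.1) ((linForm w) ^ b) := by
          refine Finset.sum_congr rfl fun P _ => ?_
          rw [eval_linForm_comm, map_pow]
      _ = 0 := hrel ((linForm w) ^ b) (by simpa using (linForm_isHom w).pow b)
  exact hgQ (Fintype.linearIndependent_iff.mp hli g hzero Q)

end Stmt15Aux

/-- If a finite set `A ⊂ ℙ²` is contained in a smooth plane cubic curve
`C = {F = 0}`, then `k_b(A) ≤ 3b` for every `b ≥ 1`. -/
theorem stmt15 (A : Finset (Pt 2)) (F : MvPolynomial (Fin 3) ℂ) (hF0 : F ≠ 0)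
    (hFhom : F.IsHomogeneous 3)
    (hsmooth : ∀ v : Fin 3 → ℂ, v ≠ 0 → eval v F = 0 →
      ∃ i : Fin 3, eval v (pderiv i F) ≠ 0)
    (hAC : ∀ P ∈ A, eval (Projectivization.rep P) F = 0) :
    ∀ b : ℕ, 1 ≤ b → kruskalRank b A ≤ 3 * b := by
  intro b hb
  refine csSup_le' ?_
  rintro k ⟨hk1, hk2⟩
  by_contra hk
  push_neg at hk
  have hsub : 3 * b + 1 ≤ A.card := le_trans (by omega) hk1
  obtain ⟨S, hSA, hScard⟩ := Finset.exists_subset_card_eq hsub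
  have hli := hk2 S hSA (by omega)
  exact Stmt15Aux.key_dep b hb F hF0 hFhom S (fun P hP => hAC P (hSA hP)) hScard hli

end
end
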